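/- (Self-adjointness of the Lam generators with respect to the partition pairing.) For all non-crossing partitions τ, σ of {1̄,…,n̄} and every i ∈ {1,…,2n}, one has (if i is non-isolated in τ then ⟨g_iτ, σ⟩ else 0) = (if i is non-isolated in σ then ⟨τ, g_iσ⟩ else 0). Equivalently, with 𝔲_i·w_τ := w_{g_iτ} when i is non-isolated in τ and 𝔲_i·w_τ := 0 when i is isolated in τ, the identity ⟨𝔲_i w_τ, w_σ⟩ = ⟨w_τ, 𝔲_i w_σ⟩ holds for every Lam algebra generator 𝔲_i, and hence for every element of the Lie algebra they generate. -/

import Mathlib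

open scoped Classical

noncomputable section

/-- `P` is a set partition of the finite ground set `G` (of integers): its blocks are nonempty
subsets of `G`, and every element of `G` lies in exactly one block. -/
def IsPartitionOf (G : Finset ℕ) (P : Finset (Finset ℕ)) : Prop :=
  (∀ B ∈ P, B.Nonempty) ∧ (∀ B ∈ P, B ⊆ G) ∧ ∀ x ∈ G, ∃! B, B ∈ P ∧ x ∈ B

/-- A collection of blocks is non-crossing: there are no `a < b < c < d` with `a, c` in one
block and `b, d` in a different block. -/
def NonCrossing (P : Finset (Finset ℕ)) : Prop :=
  ∀ a b c d : ℕ, a < b → b < c → c < d →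
    ∀ B₁ ∈ P, ∀ B₂ ∈ P, a ∈ B₁ → c ∈ B₁ → b ∈ B₂ → d ∈ B₂ → B₁ = B₂

/-- The set `{1, 3, …, 2n-1}` of "barred" boundary indices `k̄ = 2k-1`. -/
def oddSet (n : ℕ) : Finset ℕ := (Finset.range n).image fun k => 2 * k + 1

/-- The set `{2, 4, …, 2n}` of "tilde" boundary indices `k̃ = 2k`. -/
def evenSet (n : ℕ) : Finset ℕ := (Finset.range n).image fun k => 2 * k + 2

/-- `σ` is a non-crossing partition of `{1̄,…,n̄}` and `σd` is its dual: a non-crossing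
partition of `{1̃,…,ñ}` such that the merged partition `σ ∪ σd` is non-crossing and the
numbers of blocks add up to `n + 1`. -/
def IsNCPair (n : ℕ) (σ σd : Finset (Finset ℕ)) : Prop :=
  IsPartitionOf (oddSet n) σ ∧ NonCrossing σ ∧
    IsPartitionOf (evenSet n) σd ∧ NonCrossing σd ∧
    NonCrossing (σ ∪ σd) ∧ σ.card + σd.card = n + 1

/-- `i` (for odd `i = 2k-1`) is isolated in `σ` if `{k̄}` is a singleton block of `σ`;
for even `i = 2k`, `i` is isolated in `σ` if `{k̃}` is a singleton block of the dual `σd`. -/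
def IsolatedIn (σ σd : Finset (Finset ℕ)) (i : ℕ) : Prop :=
  if i % 2 = 1 then {i} ∈ σ else {i} ∈ σd

/-- Remove `i` from its block and add `{i}` as a singleton block. -/
def isolate (P : Finset (Finset ℕ)) (i : ℕ) : Finset (Finset ℕ) :=
  insert {i} (P.image fun B => B.erase i)

/-- `(gσ, gσd)` is the result (with its dual) of applying the vertex-isolating operation `g_i`
to the non-crossing partition `σ` with dual `σd`: if `i` is isolated in `σ` then `g_iσ = σ`;
if `i` is odd and non-isolated, `g_iσ` is obtained from `σ` by isolating `i`; if `i` is even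
and non-isolated, `g_iσ` is the partition whose dual is obtained from `σd` by isolating `i`. -/
def GRel (i : ℕ) (σ σd gσ gσd : Finset (Finset ℕ)) : Prop :=
  (IsolatedIn σ σd i → gσ = σ ∧ gσd = σd) ∧
    (¬ IsolatedIn σ σd i →
      (i % 2 = 1 → gσ = isolate σ i) ∧ (i % 2 = 0 → gσd = isolate σd i))

/-- The join of the partitions `τ` and `σ` of `{1̄,…,n̄}` (their finest common coarsening)
consists of a single block: any two points of the ground set are connected by a chain of
blocks of `τ` or `σ`. -/
def JoinConnected (n : ℕ) (τ σ : Finset (Finset ℕ)) : Prop :=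
  ∀ x ∈ oddSet n, ∀ y ∈ oddSet n,
    Relation.ReflTransGen (fun a b => ∃ B, (B ∈ τ ∨ B ∈ σ) ∧ a ∈ B ∧ b ∈ B) x y

/-- The pairing `⟨τ, σ⟩`: equal to `1` if the numbers of blocks of `τ` and `σ` add up to
`n + 1` and the join of `τ` and `σ` has a single block, and `0` otherwise. -/
def pairing (n : ℕ) (τ σ : Finset (Finset ℕ)) : ℝ :=
  if τ.card + σ.card = n + 1 ∧ JoinConnected n τ σ then 1 else 0

end
open Finset Relation

-- basic membership
lemma mem_oddSet {n x : ℕ} : x ∈ oddSet n ↔ x % 2 = 1 ∧ x < 2 * n := by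
  simp only [oddSet, mem_image, mem_range]
  constructor
  · rintro ⟨k, hk, rfl⟩; omega
  · rintro ⟨h1, h2⟩; exact ⟨x / 2, by omega, by omega⟩

lemma mem_evenSet {n x : ℕ} : x ∈ evenSet n ↔ x % 2 = 0 ∧ 1 ≤ x ∧ x ≤ 2 * n := by
  simp only [evenSet, mem_image, mem_range]
  constructor
  · rintro ⟨k, hk, rfl⟩; omega
  · rintro ⟨h1, h2⟩; exact ⟨x / 2 - 1, by omega, by omega⟩

lemma card_oddSet (n : ℕ) : (oddSet n).card = n := by
  rw [oddSet, Finset.card_image_of_injective _ (fun a b h => by omega), Finset.card_range]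

lemma card_evenSet (n : ℕ) : (evenSet n).card = n := by
  rw [evenSet, Finset.card_image_of_injective _ (fun a b h => by omega), Finset.card_range]

-- partitions
lemma part_block_unique {G : Finset ℕ} {P : Finset (Finset ℕ)} (h : IsPartitionOf G P)
    {B₁ B₂ : Finset ℕ} (h₁ : B₁ ∈ P) (h₂ : B₂ ∈ P) {x : ℕ} (hx₁ : x ∈ B₁) (hx₂ : x ∈ B₂) :
    B₁ = B₂ := by
  have hxG : x ∈ G := h.2.1 B₁ h₁ hx₁
  obtain ⟨B, _, hu⟩ := h.2.2 x hxG
  rw [hu B₁ ⟨h₁, hx₁⟩, hu B₂ ⟨h₂, hx₂⟩]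

lemma part_exists_block {G : Finset ℕ} {P : Finset (Finset ℕ)} (h : IsPartitionOf G P)
    {x : ℕ} (hx : x ∈ G) : ∃ B ∈ P, x ∈ B := by
  obtain ⟨B, ⟨hB, hxB⟩, _⟩ := h.2.2 x hx; exact ⟨B, hB, hxB⟩

lemma part_biUnion {G : Finset ℕ} {P : Finset (Finset ℕ)} (h : IsPartitionOf G P) :
    P.biUnion id = G := by
  apply Finset.Subset.antisymm
  · intro x hx; rw [Finset.mem_biUnion] at hx; obtain ⟨B, hB, hxB⟩ := hx; exact h.2.1 B hB hxB
  · intro x hx; rw [Finset.mem_biUnion]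
    obtain ⟨B, hB, hxB⟩ := part_exists_block h hx; exact ⟨B, hB, hxB⟩

lemma part_sum_card {G : Finset ℕ} {P : Finset (Finset ℕ)} (h : IsPartitionOf G P) :
    ∑ B ∈ P, B.card = G.card := by
  rw [← part_biUnion h, Finset.card_biUnion]
  · rfl
  · intro B₁ h₁ B₂ h₂ hne
    show Disjoint B₁ B₂
    rw [Finset.disjoint_left]
    intro x hx₁ hx₂
    exact hne (part_block_unique h h₁ h₂ hx₁ hx₂)

lemma block_two_le_card {G : Finset ℕ} {P : Finset (Finset ℕ)} (hP : IsPartitionOf G P)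
    {B : Finset ℕ} (hB : B ∈ P) (hs : ∀ u, ({u} : Finset ℕ) ∉ P) : 2 ≤ B.card := by
  have h0 : B.card ≠ 0 := by
    have := hP.1 B hB
    rw [← Finset.card_pos] at this; omega
  have h1 : B.card ≠ 1 := by
    intro h1
    obtain ⟨a, rfl⟩ := Finset.card_eq_one.mp h1
    exact hs a hB
  omega

lemma exists_singleton_block {G : Finset ℕ} {P Q : Finset (Finset ℕ)}
    (hP : IsPartitionOf G P) (hQ : IsPartitionOf G Q)
    (hcard : G.card + 1 ≤ P.card + Q.card) :
    ∃ u, ({u} : Finset ℕ) ∈ P ∨ ({u} : Finset ℕ) ∈ Q := by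
  by_contra hc
  push_neg at hc
  have key : ∀ (R : Finset (Finset ℕ)), IsPartitionOf G R → (∀ u, ({u} : Finset ℕ) ∉ R) →
      2 * R.card ≤ G.card := by
    intro R hR hsing
    calc 2 * R.card = ∑ _B ∈ R, 2 := by rw [Finset.sum_const, smul_eq_mul, mul_comm]
    _ ≤ ∑ B ∈ R, B.card := Finset.sum_le_sum fun B hB => block_two_le_card hR hB hsing
    _ = G.card := part_sum_card hR
  have k1 := key P hP (fun u => (hc u).1
  )
  have k2 := key Q hQ (fun u => (hc u).2)
  omega


def pstep (P Q : Finset (Finset ℕ)) (a b : ℕ) : Prop :=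
  ∃ B, (B ∈ P ∨ B ∈ Q) ∧ a ∈ B ∧ b ∈ B

def ConnOn (G : Finset ℕ) (P Q : Finset (Finset ℕ)) : Prop :=
  ∀ x ∈ G, ∀ y ∈ G, Relation.ReflTransGen (pstep P Q) x y

lemma pstep_comm {P Q : Finset (Finset ℕ)} {a b : ℕ} (h : pstep P Q a b) : pstep Q P a b := by
  obtain ⟨B, hB, h1, h2⟩ := h; exact ⟨B, hB.symm, h1, h2⟩

lemma rtg_lift {r s : ℕ → ℕ → Prop} {x y : ℕ} (f : ℕ → ℕ)
    (h : ∀ a b, r a b → Relation.ReflTransGen s (f a) (f b))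
    (hxy : Relation.ReflTransGen r x y) : Relation.ReflTransGen s (f x) (f y) := by
  induction hxy with
  | refl => exact .refl
  | tail _ h₂ ih => exact ih.trans (h _ _ h₂)

lemma connOn_comm {G : Finset ℕ} {P Q : Finset (Finset ℕ)} (h : ConnOn G P Q) :
    ConnOn G Q P := by
  intro x hx y hy
  have := h x hx y hy
  have lift := rtg_lift (r := pstep P Q) (s := pstep Q P) id
    (fun a b hab => ReflTransGen.single (pstep_comm hab)) this
  simpa using lift

lemma reach_isolated {G : Finset ℕ} {P Q : Finset (Finset ℕ)}
    (hP : IsPartitionOf G P) (hQ : IsPartitionOf G Q) {x : ℕ}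
    (hxP : ({x} : Finset ℕ) ∈ P) (hxQ : ({x} : Finset ℕ) ∈ Q) {z : ℕ}
    (h : Relation.ReflTransGen (pstep P Q) x z) : z = x := by
  induction h with
  | refl => rfl
  | tail _ h₂ ih =>
    obtain ⟨B, hB, h1, h2⟩ := h₂
    rw [ih] at h1
    rcases hB with hB | hB
    · have hBs : B = {x} := part_block_unique hP hB hxP h1 (Finset.mem_singleton_self x)
      rw [hBs, Finset.mem_singleton] at h2; exact h2
    · have hBs : B = {x} := part_block_unique hQ hB hxQ h1 (Finset.mem_singleton_self x)
      rw [hBs, Finset.mem_singleton] at h2; exact h2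

lemma not_connOn_isolated {G : Finset ℕ} {P Q : Finset (Finset ℕ)}
    (hP : IsPartitionOf G P) (hQ : IsPartitionOf G Q) {x y : ℕ}
    (hxP : ({x} : Finset ℕ) ∈ P) (hxQ : ({x} : Finset ℕ) ∈ Q)
    (hy : y ∈ G) (hyx : y ≠ x) : ¬ ConnOn G P Q := by
  intro h
  have hxG : x ∈ G := hP.2.1 _ hxP (Finset.mem_singleton_self x)
  exact hyx (reach_isolated hP hQ hxP hxQ (h x hxG y hy))

-- excision: removing a point x which is a singleton of P
lemma connOn_excise {G : Finset ℕ} {P Q : Finset (Finset ℕ)} {x : ℕ}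
    (hP : IsPartitionOf G P) (hQ : IsPartitionOf G Q)
    (hxP : ({x} : Finset ℕ) ∈ P) {B : Finset ℕ} (hB : B ∈ Q) (hxB : x ∈ B)
    {b₀ : ℕ} (hb₀ : b₀ ∈ B) (hb₀x : b₀ ≠ x)
    (h : ConnOn G P Q) :
    ConnOn (G.erase x) (P.erase {x}) (Q.image fun C => C.erase x) := by
  classical
  have key : ∀ a b, pstep P Q a b →
      Relation.ReflTransGen (pstep (P.erase {x}) (Q.image fun C => C.erase x))
        (if a = x then b₀ else a) (if b = x then b₀ else b) := by
    intro a b hab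
    obtain ⟨D, hD, haD, hbD⟩ := hab
    by_cases hax : a = x
    · by_cases hbx : b = x
      · rw [if_pos hax, if_pos hbx]
      · rw [if_pos hax, if_neg hbx]
        rcases hD with hD | hD
        · have hDs : D = {x} := part_block_unique hP hD hxP (hax ▸ haD) (Finset.mem_singleton_self x)
          rw [hDs, Finset.mem_singleton] at hbD; exact absurd hbD hbx
        · have hDB : D = B := part_block_unique hQ hD hB (hax ▸ haD) hxB
          subst hDB
          refine ReflTransGen.single ⟨D.erase x, Or.inr (Finset.mem_image_of_mem _ hD),
            Finset.mem_erase.mpr ⟨hb₀x, hb₀⟩, Finset.mem_erase.mpr ⟨hbx, hbD⟩⟩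
    · rw [if_neg hax]
      by_cases hbx : b = x
      · rw [if_pos hbx]
        rcases hD with hD | hD
        · have hDs : D = {x} := part_block_unique hP hD hxP (hbx ▸ hbD) (Finset.mem_singleton_self x)
          rw [hDs, Finset.mem_singleton] at haD; exact absurd haD hax
        · have hDB : D = B := part_block_unique hQ hD hB (hbx ▸ hbD) hxB
          subst hDB
          refine ReflTransGen.single ⟨D.erase x, Or.inr (Finset.mem_image_of_mem _ hD),
            Finset.mem_erase.mpr ⟨hax, haD⟩, Finset.mem_erase.mpr ⟨hb₀x, hb₀⟩⟩
      · rw [if_neg hbx]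
        rcases hD with hD | hD
        · have hDx : x ∉ D := by
            intro hxD
            have : D = {x} := part_block_unique hP hD hxP hxD (Finset.mem_singleton_self x)
            rw [this, Finset.mem_singleton] at haD; exact hax haD
          refine ReflTransGen.single ⟨D, Or.inl (Finset.mem_erase.mpr ⟨?_, hD⟩), haD, hbD⟩
          intro hc; exact hDx (hc ▸ Finset.mem_singleton_self x)
        · exact ReflTransGen.single ⟨D.erase x, Or.inr (Finset.mem_image_of_mem _ hD),
            Finset.mem_erase.mpr ⟨hax, haD⟩, Finset.mem_erase.mpr ⟨hbx, hbD⟩⟩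
  intro u hu v hv
  have hu' := Finset.mem_of_mem_erase hu
  have hv' := Finset.mem_of_mem_erase hv
  have hux : u ≠ x := Finset.ne_of_mem_erase hu
  have hvx : v ≠ x := Finset.ne_of_mem_erase hv
  have := rtg_lift (fun w => if w = x then b₀ else w) key (h u hu' v hv')
  simpa [hux, hvx] using this

def sstep (P Q : Finset (Finset ℕ)) (x a b : ℕ) : Prop :=
  a ≠ x ∧ b ≠ x ∧ pstep P Q a b

def Tcond (G : Finset ℕ) (P Q : Finset (Finset ℕ)) (x : ℕ) : Prop :=
  ∀ u ∈ G, u ≠ x → ∀ v ∈ G, v ≠ x → Relation.ReflTransGen (sstep P Q x) u v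

lemma tcond_comm {G : Finset ℕ} {P Q : Finset (Finset ℕ)} {x : ℕ} (h : Tcond G P Q x) :
    Tcond G Q P x := by
  intro u hu hux v hv hvx
  exact ReflTransGen.mono (fun a b hab => ⟨hab.1, hab.2.1, pstep_comm hab.2.2⟩) _ _ (h u hu hux v hv hvx)

lemma mem_isolate {P : Finset (Finset ℕ)} {x : ℕ} {D : Finset ℕ} :
    D ∈ isolate P x ↔ D = {x} ∨ ∃ B ∈ P, D = B.erase x := by
  simp [isolate, eq_comm]

lemma lemA {G : Finset ℕ} {P Q : Finset (Finset ℕ)} {x : ℕ}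
    (hQ : IsPartitionOf G Q) {B : Finset ℕ} (hB : B ∈ Q) (hxB : x ∈ B)
    {b₀ : ℕ} (hb₀ : b₀ ∈ B) (hb₀x : b₀ ≠ x)
    (h : ConnOn G (isolate P x) Q) : Tcond G P Q x := by
  classical
  have key : ∀ a b, pstep (isolate P x) Q a b →
      Relation.ReflTransGen (sstep P Q x) (if a = x then b₀ else a) (if b = x then b₀ else b) := by
    intro a b hab
    obtain ⟨D, hD, haD, hbD⟩ := hab
    rcases hD with hD | hD
    · rcases mem_isolate.mp hD with hDs | ⟨B', hB', hDB'⟩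
      · rw [hDs, Finset.mem_singleton] at haD hbD
        rw [haD, hbD]
      · rw [hDB'] at haD hbD
        have hax := (Finset.mem_erase.mp haD).1
        have hbx := (Finset.mem_erase.mp hbD).1
        rw [if_neg hax, if_neg hbx]
        exact ReflTransGen.single ⟨hax, hbx, B', Or.inl hB',
          (Finset.mem_erase.mp haD).2, (Finset.mem_erase.mp hbD).2⟩
    · by_cases hax : a = x
      · by_cases hbx : b = x
        · rw [if_pos hax, if_pos hbx]
        · rw [if_pos hax, if_neg hbx]
          have hDB : D = B := part_block_unique hQ hD hB (hax ▸ haD) hxB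
          exact ReflTransGen.single ⟨hb₀x, hbx, D, Or.inr hD, hDB ▸ hb₀, hbD⟩
      · rw [if_neg hax]
        by_cases hbx : b = x
        · rw [if_pos hbx]
          have hDB : D = B := part_block_unique hQ hD hB (hbx ▸ hbD) hxB
          exact ReflTransGen.single ⟨hax, hb₀x, D, Or.inr hD, haD, hDB ▸ hb₀⟩
        · rw [if_neg hbx]
          exact ReflTransGen.single ⟨hax, hbx, D, Or.inr hD, haD, hbD⟩
  intro u hu hux v hv hvx
  have := rtg_lift (fun w => if w = x then b₀ else w) key (h u hu v hv)
  simpa [hux, hvx] using this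

lemma lemB {G : Finset ℕ} {P Q : Finset (Finset ℕ)} {x : ℕ}
    (hP : IsPartitionOf G P) {A : Finset ℕ} (hA : A ∈ P) (hxA : x ∈ A)
    {a₀ : ℕ} (ha₀ : a₀ ∈ A) (ha₀x : a₀ ≠ x)
    (h : Tcond G P Q x) : ConnOn G P (isolate Q x) := by
  classical
  have hsub : ∀ a b, sstep P Q x a b → pstep P (isolate Q x) a b := by
    intro a b hab
    obtain ⟨hax, hbx, D, hD, haD, hbD⟩ := hab
    rcases hD with hD | hD
    · exact ⟨D, Or.inl hD, haD, hbD⟩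
    · exact ⟨D.erase x, Or.inr (mem_isolate.mpr (Or.inr ⟨D, hD, rfl⟩)),
        Finset.mem_erase.mpr ⟨hax, haD⟩, Finset.mem_erase.mpr ⟨hbx, hbD⟩⟩
  have ha₀G : a₀ ∈ G := hP.2.1 A hA ha₀
  intro u hu v hv
  by_cases hux : u = x
  · by_cases hvx : v = x
    · rw [hux, hvx]
    · have step1 : pstep P (isolate Q x) u a₀ := ⟨A, Or.inl hA, hux ▸ hxA, ha₀⟩
      exact (ReflTransGen.single step1).trans
        ((ReflTransGen.mono hsub _ _ (h a₀ ha₀G ha₀x v hv hvx)))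
  · by_cases hvx : v = x
    · have step1 : pstep P (isolate Q x) a₀ v := ⟨A, Or.inl hA, ha₀, hvx ▸ hxA⟩
      exact (ReflTransGen.mono hsub _ _ (h u hu hux a₀ ha₀G ha₀x)).trans (ReflTransGen.single step1)
    · exact ReflTransGen.mono hsub _ _ (h u hu hux v hv hvx)

lemma nonsingleton_block {G : Finset ℕ} {P : Finset (Finset ℕ)} (hP : IsPartitionOf G P)
    {x : ℕ} (hx : x ∈ G) (hxP : ({x} : Finset ℕ) ∉ P) :
    ∃ B ∈ P, x ∈ B ∧ ∃ b₀ ∈ B, b₀ ≠ x := by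
  obtain ⟨B, hB, hxB⟩ := part_exists_block hP hx
  refine ⟨B, hB, hxB, ?_⟩
  by_contra hc
  push_neg at hc
  have : B = {x} := by
    apply Finset.Subset.antisymm
    · intro z hz; rw [Finset.mem_singleton]; exact hc z hz
    · intro z hz; rw [Finset.mem_singleton] at hz; exact hz ▸ hxB
  exact hxP (this ▸ hB)

lemma iso_equiv {G : Finset ℕ} {P Q : Finset (Finset ℕ)} {x : ℕ}
    (hP : IsPartitionOf G P) (hQ : IsPartitionOf G Q) (hx : x ∈ G)
    (hxP : ({x} : Finset ℕ) ∉ P) (hxQ : ({x} : Finset ℕ) ∉ Q) :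
    ConnOn G (isolate P x) Q ↔ ConnOn G P (isolate Q x) := by
  obtain ⟨B, hB, hxB, b₀, hb₀, hb₀x⟩ := nonsingleton_block hQ hx hxQ
  obtain ⟨A, hA, hxA, a₀, ha₀, ha₀x⟩ := nonsingleton_block hP hx hxP
  constructor
  · intro h
    exact lemB hP hA hxA ha₀ ha₀x (lemA hQ hB hxB hb₀ hb₀x h)
  · intro h
    have h' : ConnOn G (isolate Q x) P := connOn_comm h
    have t : Tcond G Q P x := lemA hP hA hxA ha₀ ha₀x h'
    exact connOn_comm (lemB hQ hB hxB hb₀ hb₀x t)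

-- image transfer machinery
lemma finset_image_inj {f : ℕ → ℕ} {S : Set ℕ} (hinj : Set.InjOn f S)
    {B₁ B₂ : Finset ℕ} (h₁ : ↑B₁ ⊆ S) (h₂ : ↑B₂ ⊆ S)
    (h : B₁.image f = B₂.image f) : B₁ = B₂ := by
  apply Finset.Subset.antisymm <;> intro z hz
  · have : f z ∈ B₂.image f := h ▸ Finset.mem_image_of_mem f hz
    obtain ⟨w, hw, hfw⟩ := Finset.mem_image.mp this
    rwa [hinj (h₂ hw) (h₁ hz) hfw] at hw
  · have : f z ∈ B₁.image f := h.symm ▸ Finset.mem_image_of_mem f hz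
    obtain ⟨w, hw, hfw⟩ := Finset.mem_image.mp this
    rwa [hinj (h₁ hw) (h₂ hz) hfw] at hw

lemma partition_image {G : Finset ℕ} {P : Finset (Finset ℕ)} {f : ℕ → ℕ} {S : Set ℕ}
    (hinj : Set.InjOn f S) (hGS : ↑G ⊆ S) (hP : IsPartitionOf G P) :
    IsPartitionOf (G.image f) (P.image (Finset.image f)) := by
  refine ⟨?_, ?_, ?_⟩
  · intro B hB
    obtain ⟨B', hB', rfl⟩ := Finset.mem_image.mp hB
    exact (hP.1 B' hB').image f
  · intro B hB
    obtain ⟨B', hB', rfl⟩ := Finset.mem_image.mp hB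
    exact Finset.image_subset_image (hP.2.1 B' hB')
  · intro y hy
    obtain ⟨x, hx, rfl⟩ := Finset.mem_image.mp hy
    obtain ⟨B, hB, hxB⟩ := part_exists_block hP hx
    refine ⟨B.image f, ⟨Finset.mem_image_of_mem _ hB, Finset.mem_image_of_mem f hxB⟩, ?_⟩
    rintro C ⟨hC, hfxC⟩
    obtain ⟨C', hC', rfl⟩ := Finset.mem_image.mp hC
    obtain ⟨z, hz, hfz⟩ := Finset.mem_image.mp hfxC
    have hzx : z = x := hinj (hGS (hP.2.1 C' hC' hz)) (hGS hx) hfz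
    rw [part_block_unique hP hC' hB (hzx ▸ hz) hxB]

lemma card_partition_image {G : Finset ℕ} {P : Finset (Finset ℕ)} {f : ℕ → ℕ} {S : Set ℕ}
    (hinj : Set.InjOn f S) (hGS : ↑G ⊆ S) (hP : IsPartitionOf G P) :
    (P.image (Finset.image f)).card = P.card := by
  apply Finset.card_image_of_injOn
  intro B₁ h₁ B₂ h₂ h
  exact finset_image_inj hinj (fun z hz => hGS (hP.2.1 B₁ h₁ hz))
    (fun z hz => hGS (hP.2.1 B₂ h₂ hz)) h

lemma nc_image_mono {P : Finset (Finset ℕ)} {f : ℕ → ℕ} {S : Set ℕ}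
    (hmono : ∀ a ∈ S, ∀ b ∈ S, a < b ↔ f a < f b)
    (hPS : ∀ B ∈ P, ↑B ⊆ S) (hP : NonCrossing P) :
    NonCrossing (P.image (Finset.image f)) := by
  intro a' b' c' d' hab hbc hcd B₁' hB₁' B₂' hB₂' ha hc hb hd
  obtain ⟨B₁, hB₁, rfl⟩ := Finset.mem_image.mp hB₁'
  obtain ⟨B₂, hB₂, rfl⟩ := Finset.mem_image.mp hB₂'
  obtain ⟨a, haB, rfl⟩ := Finset.mem_image.mp ha
  obtain ⟨c, hcB, rfl⟩ := Finset.mem_image.mp hc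
  obtain ⟨b, hbB, rfl⟩ := Finset.mem_image.mp hb
  obtain ⟨d, hdB, rfl⟩ := Finset.mem_image.mp hd
  have hSa := hPS B₁ hB₁ haB
  have hSc := hPS B₁ hB₁ hcB
  have hSb := hPS B₂ hB₂ hbB
  have hSd := hPS B₂ hB₂ hdB
  rw [hP a b c d ((hmono a hSa b hSb).mpr hab) ((hmono b hSb c hSc).mpr hbc)
    ((hmono c hSc d hSd).mpr hcd) B₁ hB₁ B₂ hB₂ haB hcB hbB hdB]

lemma nc_image_anti {P : Finset (Finset ℕ)} {f : ℕ → ℕ} {S : Set ℕ}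
    (hanti : ∀ a ∈ S, ∀ b ∈ S, a < b ↔ f b < f a)
    (hPS : ∀ B ∈ P, ↑B ⊆ S) (hP : NonCrossing P) :
    NonCrossing (P.image (Finset.image f)) := by
  intro a' b' c' d' hab hbc hcd B₁' hB₁' B₂' hB₂' ha hc hb hd
  obtain ⟨B₁, hB₁, rfl⟩ := Finset.mem_image.mp hB₁'
  obtain ⟨B₂, hB₂, rfl⟩ := Finset.mem_image.mp hB₂'
  obtain ⟨a, haB, rfl⟩ := Finset.mem_image.mp ha
  obtain ⟨c, hcB, rfl⟩ := Finset.mem_image.mp hc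
  obtain ⟨b, hbB, rfl⟩ := Finset.mem_image.mp hb
  obtain ⟨d, hdB, rfl⟩ := Finset.mem_image.mp hd
  have hSa := hPS B₁ hB₁ haB
  have hSc := hPS B₁ hB₁ hcB
  have hSb := hPS B₂ hB₂ hbB
  have hSd := hPS B₂ hB₂ hdB
  -- f a' pattern: d < c < b < a in original, with d,b ∈ B₂, c,a ∈ B₁
  rw [hP d c b a ((hanti d hSd c hSc).mpr hcd) ((hanti c hSc b hSb).mpr hbc)
    ((hanti b hSb a hSa).mpr hab) B₂ hB₂ B₁ hB₁ hdB hbB hcB haB]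

lemma connOn_image {G : Finset ℕ} {P Q : Finset (Finset ℕ)} (f : ℕ → ℕ)
    (h : ConnOn G P Q) :
    ConnOn (G.image f) (P.image (Finset.image f)) (Q.image (Finset.image f)) := by
  intro x' hx' y' hy'
  obtain ⟨x, hx, rfl⟩ := Finset.mem_image.mp hx'
  obtain ⟨y, hy, rfl⟩ := Finset.mem_image.mp hy'
  refine rtg_lift f ?_ (h x hx y hy)
  intro a b hab
  obtain ⟨B, hB, haB, hbB⟩ := hab
  refine ReflTransGen.single ⟨B.image f, ?_, Finset.mem_image_of_mem f haB,
    Finset.mem_image_of_mem f hbB⟩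
  rcases hB with hB | hB
  · exact Or.inl (Finset.mem_image_of_mem _ hB)
  · exact Or.inr (Finset.mem_image_of_mem _ hB)

lemma connOn_preimage {G : Finset ℕ} {P Q : Finset (Finset ℕ)} {f : ℕ → ℕ} {S : Set ℕ}
    (hinj : Set.InjOn f S) (hGS : ↑G ⊆ S)
    (hP : IsPartitionOf G P) (hQ : IsPartitionOf G Q)
    (h : ConnOn (G.image f) (P.image (Finset.image f)) (Q.image (Finset.image f))) :
    ConnOn G P Q := by
  classical
  set g : ℕ → ℕ := fun y => if hy : ∃ x ∈ G, f x = y then hy.choose else 0 with hg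
  have hgf : ∀ x ∈ G, g (f x) = x := by
    intro x hx
    have hex : ∃ x' ∈ G, f x' = f x := ⟨x, hx, rfl⟩
    rw [hg]; simp only [dif_pos hex]
    exact hinj (hGS hex.choose_spec.1) (hGS hx) hex.choose_spec.2
  have key : ∀ a b, pstep (P.image (Finset.image f)) (Q.image (Finset.image f)) a b →
      Relation.ReflTransGen (pstep P Q) (g a) (g b) := by
    intro a b hab
    obtain ⟨B', hB', haB, hbB⟩ := hab
    have hblock : ∃ B, (B ∈ P ∨ B ∈ Q) ∧ B' = B.image f := by
      rcases hB' with hB' | hB'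
      · obtain ⟨B, hB, rfl⟩ := Finset.mem_image.mp hB'; exact ⟨B, Or.inl hB, rfl⟩
      · obtain ⟨B, hB, rfl⟩ := Finset.mem_image.mp hB'; exact ⟨B, Or.inr hB, rfl⟩
    obtain ⟨B, hB, rfl⟩ := hblock
    have hBG : B ⊆ G := by rcases hB with hB | hB; exacts [hP.2.1 B hB, hQ.2.1 B hB]
    obtain ⟨a₁, ha₁, rfl⟩ := Finset.mem_image.mp haB
    obtain ⟨b₁, hb₁, rfl⟩ := Finset.mem_image.mp hbB
    rw [hgf a₁ (hBG ha₁), hgf b₁ (hBG hb₁)]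
    exact ReflTransGen.single ⟨B, hB, ha₁, hb₁⟩
  intro u hu v hv
  have := h (f u) (Finset.mem_image_of_mem f hu) (f v) (Finset.mem_image_of_mem f hv)
  have lifted := rtg_lift g key this
  rwa [hgf u hu, hgf v hv] at lifted

def fullSet (n : ℕ) : Finset ℕ := oddSet n ∪ evenSet n

lemma mem_fullSet {n x : ℕ} : x ∈ fullSet n ↔ 1 ≤ x ∧ x ≤ 2 * n := by
  rw [fullSet, Finset.mem_union, mem_oddSet, mem_evenSet]
  omega

lemma odd_even_disj {n x : ℕ} (h1 : x ∈ oddSet n) (h2 : x ∈ evenSet n) : False := by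
  rw [mem_oddSet] at h1; rw [mem_evenSet] at h2; omega

lemma partition_union {n : ℕ} {σ σd : Finset (Finset ℕ)}
    (hσ : IsPartitionOf (oddSet n) σ) (hσd : IsPartitionOf (evenSet n) σd) :
    IsPartitionOf (fullSet n) (σ ∪ σd) := by
  refine ⟨?_, ?_, ?_⟩
  · intro B hB
    rcases Finset.mem_union.mp hB with h | h
    exacts [hσ.1 B h, hσd.1 B h]
  · intro B hB
    rcases Finset.mem_union.mp hB with h | h
    · exact (hσ.2.1 B h).trans Finset.subset_union_left
    · exact (hσd.2.1 B h).trans Finset.subset_union_right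
  · intro x hx
    rcases Finset.mem_union.mp hx with hx' | hx'
    · obtain ⟨B, hB, hxB⟩ := part_exists_block hσ hx'
      refine ⟨B, ⟨Finset.mem_union_left _ hB, hxB⟩, ?_⟩
      rintro C ⟨hC, hxC⟩
      rcases Finset.mem_union.mp hC with hC' | hC'
      · exact part_block_unique hσ hC' hB hxC hxB
      · exact absurd (hσd.2.1 C hC' hxC) (fun h => odd_even_disj hx' h)
    · obtain ⟨B, hB, hxB⟩ := part_exists_block hσd hx'
      refine ⟨B, ⟨Finset.mem_union_right _ hB, hxB⟩, ?_⟩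
      rintro C ⟨hC, hxC⟩
      rcases Finset.mem_union.mp hC with hC' | hC'
      · exact absurd (hσ.2.1 C hC' hxC) (fun h => odd_even_disj h hx')
      · exact part_block_unique hσd hC' hB hxC hxB

lemma card_union_parts {n : ℕ} {σ σd : Finset (Finset ℕ)}
    (hσ : IsPartitionOf (oddSet n) σ) (hσd : IsPartitionOf (evenSet n) σd) :
    (σ ∪ σd).card = σ.card + σd.card := by
  rw [Finset.card_union_of_disjoint]
  rw [Finset.disjoint_left]
  intro B hB hB'
  obtain ⟨x, hx⟩ := hσ.1 B hB
  exact odd_even_disj (hσ.2.1 B hB hx) (hσd.2.1 B hB' hx)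

lemma nc_subset {P Q : Finset (Finset ℕ)} (h : Q ⊆ P) (hP : NonCrossing P) : NonCrossing Q :=
  fun a b c d hab hbc hcd B₁ h₁ B₂ h₂ ha hc hb hd =>
    hP a b c d hab hbc hcd B₁ (h h₁) B₂ (h h₂) ha hc hb hd

-- every parity-split noncrossing partition of fullSet n has a singleton block
lemma exists_singleton_parity {n : ℕ} (hn : 1 ≤ n) {P : Finset (Finset ℕ)}
    (hP : IsPartitionOf (fullSet n) P) (hNC : NonCrossing P)
    (hsplit : ∀ B ∈ P, B ⊆ oddSet n ∨ B ⊆ evenSet n) :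
    ∃ u, ({u} : Finset ℕ) ∈ P := by
  classical
  have h1 : (1 : ℕ) ∈ fullSet n := mem_fullSet.mpr ⟨le_refl 1, by omega⟩
  obtain ⟨B₀, hB₀, _⟩ := part_exists_block hP h1
  set f : Finset ℕ → ℕ := fun B => if h : B.Nonempty then B.max' h - B.min' h else 0 with hf
  obtain ⟨B, hB, hmin⟩ := P.exists_min_image f ⟨B₀, hB₀⟩
  have hne : B.Nonempty := hP.1 B hB
  set m := B.min' hne with hm
  set M := B.max' hne with hM
  have hfB : f B = M - m := by rw [hf]; simp [dif_pos hne, hm, hM]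
  by_cases hmM : m = M
  · refine ⟨m, ?_⟩
    have : B = {m} := by
      apply Finset.Subset.antisymm
      · intro z hz
        rw [Finset.mem_singleton]
        have := B.min'_le z hz
        have := B.le_max' z hz
        omega
      · intro z hz
        rw [Finset.mem_singleton] at hz
        exact hz ▸ B.min'_mem hne
    exact this ▸ hB
  · exfalso
    have hmMlt : m < M := lt_of_le_of_ne (B.min'_le M (B.max'_mem hne)) hmM
    have hmB : m ∈ B := B.min'_mem hne
    have hMB : M ∈ B := B.max'_mem hne
    have hy : m + 1 ∉ B := by
      intro hc
      rcases hsplit B hB with h | h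
      · have h1 := mem_oddSet.mp (h hmB)
        have h2 := mem_oddSet.mp (h hc)
        omega
      · have h1 := mem_evenSet.mp (h hmB)
        have h2 := mem_evenSet.mp (h hc)
        omega
    have hyG : m + 1 ∈ fullSet n := by
      have h1 := mem_fullSet.mp (hP.2.1 B hB hmB)
      have h2 := mem_fullSet.mp (hP.2.1 B hB hMB)
      rw [mem_fullSet]; omega
    obtain ⟨C, hC, hyC⟩ := part_exists_block hP hyG
    have hCB : C ≠ B := fun h => hy (h ▸ hyC)
    have hyM : m + 1 < M := by
      rcases Nat.lt_or_ge (m + 1) M with h | h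
      · exact h
      · have heq : M = m + 1 := by omega
        exact absurd (heq ▸ hMB) hy
    -- C is contained in the open interval (m, M)
    have hCsub : ∀ z ∈ C, m < z ∧ z < M := by
      intro z hz
      constructor
      · by_contra hzm
        push_neg at hzm
        have hzm' : z < m := lt_of_le_of_ne hzm
          (fun h => hCB (part_block_unique hP hC hB (h ▸ hz) hmB))
        exact hCB (hNC z m (m+1) M hzm' (by omega) hyM C hC B hB hz hyC hmB hMB)
      · by_contra hzM
        push_neg at hzM
        have hzne : z ≠ M := fun h => hCB (part_block_unique hP hC hB (h ▸ hz) hMB)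
        have hzM' : M < z := by omega
        exact hCB (hNC m (m+1) M z (by omega) hyM hzM' B hB C hC hmB hMB hyC hz).symm
    have hCne : C.Nonempty := hP.1 C hC
    have hfC : f C = C.max' hCne - C.min' hCne := by rw [hf]; simp [dif_pos hCne]
    have h1 := (hCsub _ (C.max'_mem hCne)).2
    have h2 := (hCsub _ (C.min'_mem hCne)).1
    have := hmin C hC
    rw [hfB, hfC] at this
    have h3 := C.min'_le _ (C.max'_mem hCne)
    omega

def cmap (p : ℕ) (y : ℕ) : ℕ := if y < p then y else y - 2

def cSet (p : ℕ) : Set ℕ := {y : ℕ | y ≠ p ∧ y ≠ p + 1}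

lemma cmap_lt_iff {p a b : ℕ} (ha : a ∈ cSet p) (hb : b ∈ cSet p) :
    a < b ↔ cmap p a < cmap p b := by
  obtain ⟨ha1, ha2⟩ := ha
  obtain ⟨hb1, hb2⟩ := hb
  unfold cmap
  split_ifs <;> omega

lemma cmap_injOn (p : ℕ) : Set.InjOn (cmap p) (cSet p) := by
  intro a ha b hb h
  by_contra hne
  rcases Nat.lt_or_ge a b with hl | hge
  · have := (cmap_lt_iff ha hb).mp hl; omega
  · have hl : b < a := by omega
    have := (cmap_lt_iff hb ha).mp hl; omega

lemma sdiff_subset_cSet {p : ℕ} (G : Finset ℕ) :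
    ↑(G \ {p, p + 1}) ⊆ cSet p := by
  intro z hz
  simp only [Finset.coe_sdiff, Set.mem_diff, Finset.coe_insert, Finset.coe_singleton] at hz
  obtain ⟨_, hz2⟩ := hz
  constructor <;> intro h <;> apply hz2 <;> simp [h]

lemma image_cmap_oddSet {n p : ℕ} (hp1 : 1 ≤ p) (hp2 : p + 1 ≤ 2 * n) :
    (oddSet n \ {p, p + 1}).image (cmap p) = oddSet (n - 1) := by
  apply Finset.Subset.antisymm
  · intro y hy
    obtain ⟨z, hz, rfl⟩ := Finset.mem_image.mp hy
    rw [Finset.mem_sdiff] at hz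
    obtain ⟨hz1, hz2⟩ := hz
    rw [Finset.mem_insert, Finset.mem_singleton] at hz2
    push_neg at hz2
    rw [mem_oddSet] at hz1
    rw [mem_oddSet]
    unfold cmap
    split_ifs <;> omega
  · intro y hy
    rw [mem_oddSet] at hy
    refine Finset.mem_image.mpr ⟨if y < p then y else y + 2, ?_, ?_⟩
    · rw [Finset.mem_sdiff, mem_oddSet, Finset.mem_insert, Finset.mem_singleton]
      split_ifs <;> (push_neg; omega)
    · unfold cmap; split_ifs <;> omega

lemma image_cmap_evenSet {n p : ℕ} (hp1 : 1 ≤ p) (hp2 : p + 1 ≤ 2 * n) :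
    (evenSet n \ {p, p + 1}).image (cmap p) = evenSet (n - 1) := by
  apply Finset.Subset.antisymm
  · intro y hy
    obtain ⟨z, hz, rfl⟩ := Finset.mem_image.mp hy
    rw [Finset.mem_sdiff] at hz
    obtain ⟨hz1, hz2⟩ := hz
    rw [Finset.mem_insert, Finset.mem_singleton] at hz2
    push_neg at hz2
    rw [mem_evenSet] at hz1
    rw [mem_evenSet]
    unfold cmap
    split_ifs <;> omega
  · intro y hy
    rw [mem_evenSet] at hy
    refine Finset.mem_image.mpr ⟨if y < p then y else y + 2, ?_, ?_⟩
    · rw [Finset.mem_sdiff, mem_evenSet, Finset.mem_insert, Finset.mem_singleton]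
      split_ifs <;> (push_neg; omega)
    · unfold cmap; split_ifs <;> omega

lemma image_cmap_fullSet {n p : ℕ} (hp1 : 1 ≤ p) (hp2 : p + 1 ≤ 2 * n) :
    (fullSet n \ {p, p + 1}).image (cmap p) = fullSet (n - 1) := by
  have h : fullSet n \ {p, p+1} = (oddSet n \ {p, p+1}) ∪ (evenSet n \ {p, p+1}) := by
    rw [fullSet, Finset.union_sdiff_distrib]
  rw [h, Finset.image_union, image_cmap_oddSet hp1 hp2, image_cmap_evenSet hp1 hp2, fullSet]

lemma partition_remove_singleton {G : Finset ℕ} {P : Finset (Finset ℕ)} {u : ℕ}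
    (hP : IsPartitionOf G P) (hu : ({u} : Finset ℕ) ∈ P) :
    IsPartitionOf (G.erase u) (P.erase {u}) := by
  refine ⟨fun B hB => hP.1 B (Finset.mem_of_mem_erase hB), ?_, ?_⟩
  · intro B hB
    have hBP := Finset.mem_of_mem_erase hB
    intro z hz
    refine Finset.mem_erase.mpr ⟨?_, hP.2.1 B hBP hz⟩
    intro hzu
    exact (Finset.ne_of_mem_erase hB)
      (part_block_unique hP hBP hu (hzu ▸ hz) (Finset.mem_singleton_self u))
  · intro x hx
    obtain ⟨hxu, hxG⟩ := Finset.mem_erase.mp hx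
    obtain ⟨B, hB, hxB⟩ := part_exists_block hP hxG
    have hBu : B ≠ {u} := by
      intro h; rw [h, Finset.mem_singleton] at hxB; exact hxu hxB
    refine ⟨B, ⟨Finset.mem_erase.mpr ⟨hBu, hB⟩, hxB⟩, ?_⟩
    rintro C ⟨hC, hxC⟩
    exact part_block_unique hP (Finset.mem_of_mem_erase hC) hB hxC hxB

lemma partition_erase_point {G : Finset ℕ} {P : Finset (Finset ℕ)}
    (hP : IsPartitionOf G P) (v : ℕ) :
    IsPartitionOf (G.erase v) ((P.image fun B => B.erase v).erase ∅) := by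
  refine ⟨?_, ?_, ?_⟩
  · intro B hB
    exact Finset.nonempty_iff_ne_empty.mpr (Finset.ne_of_mem_erase hB)
  · intro B hB
    obtain ⟨D, hD, rfl⟩ := Finset.mem_image.mp (Finset.mem_of_mem_erase hB)
    exact Finset.erase_subset_erase v (hP.2.1 D hD)
  · intro x hx
    obtain ⟨hxv, hxG⟩ := Finset.mem_erase.mp hx
    obtain ⟨D, hD, hxD⟩ := part_exists_block hP hxG
    have hmem : x ∈ D.erase v := Finset.mem_erase.mpr ⟨hxv, hxD⟩
    refine ⟨D.erase v, ⟨Finset.mem_erase.mpr ⟨?_, Finset.mem_image_of_mem _ hD⟩, hmem⟩, ?_⟩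
    · intro h; rw [h] at hmem; exact absurd hmem (Finset.notMem_empty x)
    · rintro C ⟨hC, hxC⟩
      obtain ⟨D', hD', rfl⟩ := Finset.mem_image.mp (Finset.mem_of_mem_erase hC)
      rw [part_block_unique hP hD' hD (Finset.mem_of_mem_erase hxC) hxD]

lemma nc_erase_point {P : Finset (Finset ℕ)} (hNC : NonCrossing P) (v : ℕ) :
    NonCrossing ((P.image fun B => B.erase v).erase ∅) := by
  intro a b c d hab hbc hcd B₁ h₁ B₂ h₂ ha hc hb hd
  obtain ⟨D₁, hD₁, rfl⟩ := Finset.mem_image.mp (Finset.mem_of_mem_erase h₁)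
  obtain ⟨D₂, hD₂, rfl⟩ := Finset.mem_image.mp (Finset.mem_of_mem_erase h₂)
  rw [hNC a b c d hab hbc hcd D₁ hD₁ D₂ hD₂ (Finset.mem_of_mem_erase ha)
    (Finset.mem_of_mem_erase hc) (Finset.mem_of_mem_erase hb) (Finset.mem_of_mem_erase hd)]

lemma LB : ∀ n : ℕ, 1 ≤ n → ∀ P : Finset (Finset ℕ),
    IsPartitionOf (fullSet n) P → NonCrossing P →
    (∀ B ∈ P, B ⊆ oddSet n ∨ B ⊆ evenSet n) → n + 1 ≤ P.card := by
  intro n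
  induction n using Nat.strong_induction_on with
  | _ n IH =>
  intro hn P hP hNC hsplit
  -- two distinct blocks exist
  have h1G : (1 : ℕ) ∈ fullSet n := mem_fullSet.mpr ⟨by omega, by omega⟩
  have h2G : (2 : ℕ) ∈ fullSet n := mem_fullSet.mpr ⟨by omega, by omega⟩
  obtain ⟨B₁, hB₁, h1B⟩ := part_exists_block hP h1G
  obtain ⟨B₂, hB₂, h2B⟩ := part_exists_block hP h2G
  have hB12 : B₁ ≠ B₂ := by
    intro h
    subst h
    rcases hsplit B₁ hB₁ with hs | hs
    · have := mem_oddSet.mp (hs h2B); omega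
    · have := mem_evenSet.mp (hs h1B); omega
  have hcard2 : 2 ≤ P.card := Finset.one_lt_card.mpr ⟨B₁, hB₁, B₂, hB₂, hB12⟩
  rcases Nat.lt_or_ge n 2 with hn2 | hn2
  · have : n = 1 := by omega
    omega
  -- n ≥ 2 : find singleton and reduce
  obtain ⟨u, hu⟩ := exists_singleton_parity (by omega) hP hNC hsplit
  have huG : u ∈ fullSet n := hP.2.1 _ hu (Finset.mem_singleton_self u)
  rw [mem_fullSet] at huG
  obtain ⟨p, v, hp1, hp2, hvu, hvG, hpair⟩ :
      ∃ p v : ℕ, 1 ≤ p ∧ p + 1 ≤ 2 * n ∧ v ≠ u ∧ v ∈ fullSet n ∧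
        ({p, p + 1} : Finset ℕ) = {u, v} := by
    by_cases hult : u < 2 * n
    · exact ⟨u, u + 1, by omega, by omega, by omega, mem_fullSet.mpr ⟨by omega, by omega⟩, rfl⟩
    · refine ⟨u - 1, u - 1, by omega, by omega, by omega,
        mem_fullSet.mpr ⟨by omega, by omega⟩, ?_⟩
      have : u - 1 + 1 = u := by omega
      rw [this, Finset.pair_comm]
  set P₁ := P.erase {u} with hP₁
  have hP₁part : IsPartitionOf ((fullSet n).erase u) P₁ := partition_remove_singleton hP hu
  set P' := (P₁.image fun B => B.erase v).erase ∅ with hP'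
  have hP'part : IsPartitionOf (((fullSet n).erase u).erase v) P' :=
    partition_erase_point hP₁part v
  have hground : ((fullSet n).erase u).erase v = fullSet n \ {p, p + 1} := by
    rw [hpair]
    ext z
    simp only [Finset.mem_erase, Finset.mem_sdiff, Finset.mem_insert, Finset.mem_singleton]
    constructor
    · rintro ⟨hzv, hzu, hz⟩; exact ⟨hz, by tauto⟩
    · rintro ⟨hz, h⟩; push_neg at h; exact ⟨h.2, h.1, hz⟩
  rw [hground] at hP'part
  -- image under cmap
  set P'' := P'.image (Finset.image (cmap p)) with hP''
  have hGS : ↑(fullSet n \ {p, p + 1}) ⊆ cSet p := sdiff_subset_cSet _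
  have hP''part : IsPartitionOf (fullSet (n - 1)) P'' := by
    have := partition_image (cmap_injOn p) hGS hP'part
    rwa [image_cmap_fullSet hp1 hp2] at this
  have hP'NC : NonCrossing P' := nc_erase_point (nc_subset (Finset.erase_subset _ _) hNC) v
  have hP''NC : NonCrossing P'' := by
    refine nc_image_mono (fun a ha b hb => cmap_lt_iff ha hb) ?_ hP'NC
    intro B hB z hz
    exact hGS (Finset.mem_coe.mpr (hP'part.2.1 B hB (Finset.mem_coe.mp hz)))
  have hP''split : ∀ B ∈ P'', B ⊆ oddSet (n - 1) ∨ B ⊆ evenSet (n - 1) := by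
    intro B'' hB''
    obtain ⟨B', hB', rfl⟩ := Finset.mem_image.mp hB''
    have hB'G : B' ⊆ fullSet n \ {p, p + 1} := hP'part.2.1 B' hB'
    obtain ⟨D, hD, rfl⟩ := Finset.mem_image.mp (Finset.mem_of_mem_erase hB')
    have hDP : D ∈ P := Finset.mem_of_mem_erase hD
    rcases hsplit D hDP with hs | hs
    · left
      rw [← image_cmap_oddSet hp1 hp2]
      apply Finset.image_subset_image
      intro z hz
      exact Finset.mem_sdiff.mpr ⟨hs (Finset.mem_of_mem_erase hz),
        (Finset.mem_sdiff.mp (hB'G hz)).2⟩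
    · right
      rw [← image_cmap_evenSet hp1 hp2]
      apply Finset.image_subset_image
      intro z hz
      exact Finset.mem_sdiff.mpr ⟨hs (Finset.mem_of_mem_erase hz),
        (Finset.mem_sdiff.mp (hB'G hz)).2⟩
  have hIH := IH (n - 1) (by omega) (by omega) P'' hP''part hP''NC hP''split
  have hcardP'' : P''.card = P'.card :=
    card_partition_image (cmap_injOn p) hGS hP'part
  have hcardP' : P'.card ≤ P.card - 1 := by
    calc P'.card ≤ (P₁.image fun B => B.erase v).card := Finset.card_erase_le
    _ ≤ P₁.card := Finset.card_image_le
    _ = P.card - 1 := Finset.card_erase_of_mem hu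
  omega

-- Lemma M : merging the two dual blocks adjacent (cyclically) to an odd point x,
-- while deleting x from the primal side, stays noncrossing.
lemma lemmaM {n : ℕ} {τ τd : Finset (Finset ℕ)}
    (hτ : IsPartitionOf (oddSet n) τ) (hτd : IsPartitionOf (evenSet n) τd)
    (hNC : NonCrossing (τ ∪ τd)) {x : ℕ} (hx : x ∈ oddSet n)
    {Cl Cr : Finset ℕ} (hCl : Cl ∈ τd) (hCr : Cr ∈ τd)
    (hlCl : (if x = 1 then 2 * n else x - 1) ∈ Cl) (hrCr : x + 1 ∈ Cr) :
    NonCrossing (((τ.image fun B => B.erase x).erase ∅) ∪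
      insert (Cl ∪ Cr) ((τd.erase Cl).erase Cr)) := by
  classical
  set l := if x = 1 then 2 * n else x - 1 with hl
  set r := x + 1 with hr
  have hfull := partition_union hτ hτd
  have hxodd := mem_oddSet.mp hx
  have hClu : Cl ∈ τ ∪ τd := Finset.mem_union_right _ hCl
  have hCru : Cr ∈ τ ∪ τd := Finset.mem_union_right _ hCr
  have hbound : ∀ {D : Finset ℕ} {z : ℕ}, D ∈ τ ∪ τd → z ∈ D → 1 ≤ z ∧ z ≤ 2 * n :=
    fun hD hz => mem_fullSet.mp (hfull.2.1 _ hD hz)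
  have hnotl : ∀ {D : Finset ℕ} {z : ℕ}, D ∈ τ ∪ τd → D ≠ Cl → z ∈ D → z ≠ l :=
    fun hD hne hz hzl => hne (part_block_unique hfull hD hClu (hzl ▸ hz) hlCl)
  have hnotr : ∀ {D : Finset ℕ} {z : ℕ}, D ∈ τ ∪ τd → D ≠ Cr → z ∈ D → z ≠ r :=
    fun hD hne hz hzr => hne (part_block_unique hfull hD hCru (hzr ▸ hz) hrCr)
  -- classification of blocks of the new family
  have classify : ∀ {B : Finset ℕ}, B ∈ ((τ.image fun B => B.erase x).erase ∅) ∪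
      insert (Cl ∪ Cr) ((τd.erase Cl).erase Cr) →
      B = Cl ∪ Cr ∨ ∃ D, (D ∈ τ ∧ B = D.erase x) ∨ (D ∈ τd ∧ B = D ∧ D ≠ Cl ∧ D ≠ Cr) := by
    intro B hB
    rcases Finset.mem_union.mp hB with hB | hB
    · obtain ⟨D, hD, rfl⟩ := Finset.mem_image.mp (Finset.mem_of_mem_erase hB)
      exact Or.inr ⟨D, Or.inl ⟨hD, rfl⟩⟩
    · rcases Finset.mem_insert.mp hB with hB | hB
      · exact Or.inl hB
      · exact Or.inr ⟨B, Or.inr ⟨Finset.mem_of_mem_erase (Finset.mem_of_mem_erase hB), rfl,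
          Finset.ne_of_mem_erase (Finset.mem_of_mem_erase hB), Finset.ne_of_mem_erase hB⟩⟩
  -- extraction of "old-block" data
  have getold : ∀ {B : Finset ℕ},
      (∃ D, (D ∈ τ ∧ B = D.erase x) ∨ (D ∈ τd ∧ B = D ∧ D ≠ Cl ∧ D ≠ Cr)) →
      ∃ D, D ∈ τ ∪ τd ∧ D ≠ Cl ∧ D ≠ Cr ∧ B ⊆ D ∧ (∀ z ∈ B, z ≠ x) := by
    rintro B ⟨D, hD | hD⟩
    · obtain ⟨hDτ, rfl⟩ := hD
      have hDCl : D ≠ Cl := by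
        rintro rfl
        obtain ⟨z, hz⟩ := hτ.1 D hDτ
        exact odd_even_disj (hτ.2.1 D hDτ hz) (hτd.2.1 D hCl hz)
      have hDCr : D ≠ Cr := by
        rintro rfl
        obtain ⟨z, hz⟩ := hτ.1 D hDτ
        exact odd_even_disj (hτ.2.1 D hDτ hz) (hτd.2.1 D hCr hz)
      exact ⟨D, Finset.mem_union_left _ hDτ, hDCl, hDCr, Finset.erase_subset x D,
        fun z hz => Finset.ne_of_mem_erase hz⟩
    · obtain ⟨hDτd, hBD, hDCl, hDCr⟩ := hD
      refine ⟨B, Finset.mem_union_right _ (hBD ▸ hDτd : B ∈ τd), hBD ▸ hDCl, hBD ▸ hDCr,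
        Finset.Subset.refl B, ?_⟩
      rintro z hz rfl
      exact odd_even_disj hx (hτd.2.1 B (hBD ▸ hDτd) hz)
  intro a b c d hab hbc hcd B₁ hB₁ B₂ hB₂ ha hc hb hd
  rcases classify hB₁ with h₁ | h₁ <;> rcases classify hB₂ with h₂ | h₂
  · rw [h₁, h₂]
  · -- B₁ = M, B₂ old : a, c ∈ Cl ∪ Cr ; b, d ∈ D
    exfalso
    obtain ⟨D, hDu, hDCl, hDCr, hBD, hBx⟩ := getold h₂
    rw [h₁] at ha hc
    have hbD := hBD hb
    have hdD := hBD hd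
    have hbx : b ≠ x := hBx b hb
    have hdx : d ≠ x := hBx d hd
    have hbl : b ≠ l := hnotl hDu hDCl hbD
    have hbr : b ≠ r := hnotr hDu hDCr hbD
    have hdl : d ≠ l := hnotl hDu hDCl hdD
    have hdr : d ≠ r := hnotr hDu hDCr hdD
    have hbB := hbound hDu hbD
    have hdB := hbound hDu hdD
    by_cases hx1 : x = 1
    · -- wrap : l = 2n, r = 2
      have hlv : l = 2 * n := by rw [hl, if_pos hx1]
      have haM : 2 ≤ a := by
        rcases Finset.mem_union.mp ha with h | h
        · have := mem_evenSet.mp (hτd.2.1 Cl hCl h); omega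
        · have := mem_evenSet.mp (hτd.2.1 Cr hCr h); omega
      rcases Finset.mem_union.mp hc with hcCl | hcCr
      · -- c ∈ Cl : use (b,c,d,l)
        have hdlt : d < l := by omega
        exact hDCl (hNC b c d l hbc hcd hdlt D hDu Cl hClu hbD hdD hcCl (hlv ▸ hlCl))
      · -- c ∈ Cr : use (r,b,c,d)
        have hrb : r < b := by omega
        exact (Ne.symm hDCr) (hNC r b c d hrb hbc hcd Cr hCru D hDu hrCr hcCr hbD hdD)
    · -- interior : l = x - 1
      have hlv : l = x - 1 := by rw [hl, if_neg hx1]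
      have hx3 : 3 ≤ x := by omega
      rcases Finset.mem_union.mp ha with haCl | haCr
      · rcases Finset.mem_union.mp hc with hcCl | hcCl
        · exact (Ne.symm hDCl) (hNC a b c d hab hbc hcd Cl hClu D hDu haCl hcCl hbD hdD)
        · -- a ∈ Cl, c ∈ Cr
          rcases (by omega : b < l ∨ r < b) with hblt | hbgt
          · rcases (by omega : d < l ∨ l < d) with hdlt | hdgt
            · exact hDCr (hNC b c d r hbc hcd (by omega) D hDu Cr hCru hbD hdD hcCl hrCr)
            · exact (Ne.symm hDCl) (hNC a b l d hab hblt hdgt Cl hClu D hDu haCl hlCl hbD hdD)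
          · exact (Ne.symm hDCr) (hNC r b c d hbgt hbc hcd Cr hCru D hDu hrCr hcCl hbD hdD)
      · rcases Finset.mem_union.mp hc with hcCl | hcCr
        · -- a ∈ Cr, c ∈ Cl
          rcases (by omega : b < l ∨ r < b) with hblt | hbgt
          · rcases (by omega : d < l ∨ r < d) with hdlt | hdgt
            · exact hDCl (hNC b c d l hbc hcd hdlt D hDu Cl hClu hbD hdD hcCl hlCl)
            · exact (Ne.symm hDCr) (hNC a b r d hab (by omega) hdgt Cr hCru D hDu haCr hrCr hbD hdD)
          · exact (Ne.symm hDCl) (hNC l b c d (by omega) hbc hcd Cl hClu D hDu hlCl hcCl hbD hdD)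
        · exact (Ne.symm hDCr) (hNC a b c d hab hbc hcd Cr hCru D hDu haCr hcCr hbD hdD)
  · -- B₁ old, B₂ = M : a, c ∈ D ; b, d ∈ Cl ∪ Cr
    exfalso
    obtain ⟨D, hDu, hDCl, hDCr, hBD, hBx⟩ := getold h₁
    rw [h₂] at hb hd
    have haD := hBD ha
    have hcD := hBD hc
    have hax : a ≠ x := hBx a ha
    have hcx : c ≠ x := hBx c hc
    have hal : a ≠ l := hnotl hDu hDCl haD
    have har : a ≠ r := hnotr hDu hDCr haD
    have hclne : c ≠ l := hnotl hDu hDCl hcD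
    have hcrne : c ≠ r := hnotr hDu hDCr hcD
    have haB := hbound hDu haD
    have hcB := hbound hDu hcD
    by_cases hx1 : x = 1
    · -- wrap
      have hlv : l = 2 * n := by rw [hl, if_pos hx1]
      rcases Finset.mem_union.mp hb with hbCl | hbCr
      · rcases Finset.mem_union.mp hd with hdCl | hdCr
        · exact hDCl (hNC a b c d hab hbc hcd D hDu Cl hClu haD hcD hbCl hdCl)
        · -- b ∈ Cl, d ∈ Cr : use (a,b,c,l)
          have hcl : c < l := by omega
          exact hDCl (hNC a b c l hab hbc hcl D hDu Cl hClu haD hcD hbCl hlCl)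
      · -- b ∈ Cr : use (r,a,b,c)
        have hbCrB := mem_evenSet.mp (hτd.2.1 Cr hCr hbCr)
        have hra : r < a := by omega
        exact (Ne.symm hDCr) (hNC r a b c hra hab hbc Cr hCru D hDu hrCr hbCr haD hcD)
    · -- interior
      have hlv : l = x - 1 := by rw [hl, if_neg hx1]
      have hx3 : 3 ≤ x := by omega
      rcases Finset.mem_union.mp hb with hbCl | hbCr
      · rcases Finset.mem_union.mp hd with hdCl | hdCr
        · exact hDCl (hNC a b c d hab hbc hcd D hDu Cl hClu haD hcD hbCl hdCl)
        · -- b ∈ Cl, d ∈ Cr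
          rcases (by omega : c < l ∨ r < c) with hclt | hcgt
          · exact hDCl (hNC a b c l hab hbc (by omega) D hDu Cl hClu haD hcD hbCl hlCl)
          · rcases (by omega : a < l ∨ r < a) with halt | hagt
            · exact hDCr (hNC a r c d (by omega) hcgt hcd D hDu Cr hCru haD hcD hrCr hdCr)
            · exact (Ne.symm hDCl) (hNC l a b c (by omega) hab hbc Cl hClu D hDu hlCl hbCl haD hcD)
      · rcases Finset.mem_union.mp hd with hdCl | hdCr
        · -- b ∈ Cr, d ∈ Cl
          rcases (by omega : c < l ∨ r < c) with hclt | hcgt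
          · exact hDCr (hNC a b c r hab hbc (by omega) D hDu Cr hCru haD hcD hbCr hrCr)
          · rcases (by omega : a < l ∨ r < a) with halt | hagt
            · exact hDCl (hNC a l c d (by omega) (by omega) hcd D hDu Cl hClu haD hcD hlCl hdCl)
            · exact (Ne.symm hDCr) (hNC r a b c hagt hab hbc Cr hCru D hDu hrCr hbCr haD hcD)
        · exact hDCr (hNC a b c d hab hbc hcd D hDu Cr hCru haD hcD hbCr hdCr)
  · -- both old
    obtain ⟨D₁, hD₁⟩ := h₁
    obtain ⟨D₂, hD₂⟩ := h₂
    have m₁ : (D₁ ∈ τ ∧ B₁ = D₁.erase x) ∨ (D₁ ∈ τd ∧ B₁ = D₁) := by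
      rcases hD₁ with ⟨h, e⟩ | ⟨h, e, _, _⟩
      exacts [Or.inl ⟨h, e⟩, Or.inr ⟨h, e⟩]
    have m₂ : (D₂ ∈ τ ∧ B₂ = D₂.erase x) ∨ (D₂ ∈ τd ∧ B₂ = D₂) := by
      rcases hD₂ with ⟨h, e⟩ | ⟨h, e, _, _⟩
      exacts [Or.inl ⟨h, e⟩, Or.inr ⟨h, e⟩]
    have hsub₁ : B₁ ⊆ D₁ := by
      rcases m₁ with ⟨_, e⟩ | ⟨_, e⟩
      · rw [e]; exact Finset.erase_subset _ _
      · rw [e]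
    have hsub₂ : B₂ ⊆ D₂ := by
      rcases m₂ with ⟨_, e⟩ | ⟨_, e⟩
      · rw [e]; exact Finset.erase_subset _ _
      · rw [e]
    have hu₁ : D₁ ∈ τ ∪ τd := by
      rcases m₁ with ⟨h, _⟩ | ⟨h, _⟩
      exacts [Finset.mem_union_left _ h, Finset.mem_union_right _ h]
    have hu₂ : D₂ ∈ τ ∪ τd := by
      rcases m₂ with ⟨h, _⟩ | ⟨h, _⟩
      exacts [Finset.mem_union_left _ h, Finset.mem_union_right _ h]
    have heq : D₁ = D₂ :=
      hNC a b c d hab hbc hcd D₁ hu₁ D₂ hu₂ (hsub₁ ha) (hsub₁ hc) (hsub₂ hb) (hsub₂ hd)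
    subst heq
    rcases m₁ with ⟨hm₁, e₁⟩ | ⟨hm₁, e₁⟩ <;> rcases m₂ with ⟨hm₂, e₂⟩ | ⟨hm₂, e₂⟩
    · rw [e₁, e₂]
    · exact absurd (odd_even_disj (hτ.2.1 D₁ hm₁ (hsub₁ ha)) (hτd.2.1 D₁ hm₂ (hsub₁ ha))) not_false
    · exact absurd (odd_even_disj (hτ.2.1 D₁ hm₂ (hsub₁ ha)) (hτd.2.1 D₁ hm₁ (hsub₁ ha))) not_false
    · rw [e₁, e₂]

lemma nc_union_sub {P P' : Finset (Finset ℕ)} (h : P' ⊆ P) : NonCrossing P → NonCrossing P' :=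
  nc_subset h

lemma partition_merge {G : Finset ℕ} {P : Finset (Finset ℕ)} (hP : IsPartitionOf G P)
    {C₁ C₂ : Finset ℕ} (h₁ : C₁ ∈ P) (h₂ : C₂ ∈ P) (hne : C₁ ≠ C₂) :
    IsPartitionOf G (insert (C₁ ∪ C₂) ((P.erase C₁).erase C₂)) := by
  refine ⟨?_, ?_, ?_⟩
  · intro B hB
    rcases Finset.mem_insert.mp hB with rfl | hB
    · obtain ⟨z, hz⟩ := hP.1 C₁ h₁
      exact ⟨z, Finset.mem_union_left _ hz⟩
    · exact hP.1 B (Finset.mem_of_mem_erase (Finset.mem_of_mem_erase hB))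
  · intro B hB
    rcases Finset.mem_insert.mp hB with rfl | hB
    · exact Finset.union_subset (hP.2.1 C₁ h₁) (hP.2.1 C₂ h₂)
    · exact hP.2.1 B (Finset.mem_of_mem_erase (Finset.mem_of_mem_erase hB))
  · intro x hx
    obtain ⟨B, hB, hxB⟩ := part_exists_block hP hx
    by_cases hBC : B = C₁ ∨ B = C₂
    · refine ⟨C₁ ∪ C₂, ⟨Finset.mem_insert_self _ _, ?_⟩, ?_⟩
      · rcases hBC with rfl | rfl
        exacts [Finset.mem_union_left _ hxB, Finset.mem_union_right _ hxB]
      · rintro D ⟨hD, hxD⟩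
        rcases Finset.mem_insert.mp hD with rfl | hD
        · rfl
        · exfalso
          have hDP := Finset.mem_of_mem_erase (Finset.mem_of_mem_erase hD)
          have hD₁ := Finset.ne_of_mem_erase (Finset.mem_of_mem_erase hD)
          have hD₂ := Finset.ne_of_mem_erase hD
          rcases hBC with rfl | rfl
          · exact hD₁ (part_block_unique hP hDP hB hxD hxB)
          · exact hD₂ (part_block_unique hP hDP hB hxD hxB)
    · push_neg at hBC
      refine ⟨B, ⟨Finset.mem_insert_of_mem (Finset.mem_erase.mpr ⟨hBC.2,
        Finset.mem_erase.mpr ⟨hBC.1, hB⟩⟩), hxB⟩, ?_⟩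
      rintro D ⟨hD, hxD⟩
      rcases Finset.mem_insert.mp hD with rfl | hD
      · exfalso
        rcases Finset.mem_union.mp hxD with h | h
        · exact hBC.1 (part_block_unique hP hB h₁ hxB h)
        · exact hBC.2 (part_block_unique hP hB h₂ hxB h)
      · exact part_block_unique hP (Finset.mem_of_mem_erase (Finset.mem_of_mem_erase hD)) hB hxD hxB

lemma card_merge {G : Finset ℕ} {P : Finset (Finset ℕ)} (hP : IsPartitionOf G P)
    {C₁ C₂ : Finset ℕ} (h₁ : C₁ ∈ P) (h₂ : C₂ ∈ P) (hne : C₁ ≠ C₂) :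
    (insert (C₁ ∪ C₂) ((P.erase C₁).erase C₂)).card = P.card - 1 := by
  have hnotin : C₁ ∪ C₂ ∉ (P.erase C₁).erase C₂ := by
    intro hD
    obtain ⟨z, hz⟩ := hP.1 C₁ h₁
    exact (Finset.ne_of_mem_erase (Finset.mem_of_mem_erase hD))
      (part_block_unique hP (Finset.mem_of_mem_erase (Finset.mem_of_mem_erase hD)) h₁
        (Finset.mem_union_left _ hz) hz)
  rw [Finset.card_insert_of_notMem hnotin, Finset.card_erase_of_mem
    (Finset.mem_erase.mpr ⟨Ne.symm hne, h₂⟩), Finset.card_erase_of_mem h₁]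
  have h2 : 2 ≤ P.card := Finset.one_lt_card.mpr ⟨C₁, h₁, C₂, h₂, hne⟩
  omega

lemma erase_image_of_sing {G : Finset ℕ} {P : Finset (Finset ℕ)} (hP : IsPartitionOf G P)
    {v : ℕ} (hv : ({v} : Finset ℕ) ∈ P) :
    ((P.image fun B => B.erase v).erase ∅) = P.erase {v} := by
  ext C
  constructor
  · intro hC
    obtain ⟨B, hB, rfl⟩ := Finset.mem_image.mp (Finset.mem_of_mem_erase hC)
    have hBv : B ≠ {v} := by
      rintro rfl
      exact (Finset.ne_of_mem_erase hC) (Finset.erase_singleton v)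
    have hvB : v ∉ B := fun h => hBv (part_block_unique hP hB hv h (Finset.mem_singleton_self v))
    rw [Finset.erase_eq_of_notMem hvB]
    exact Finset.mem_erase.mpr ⟨hBv, hB⟩
  · intro hC
    have hCP := Finset.mem_of_mem_erase hC
    have hvC : v ∉ C := fun h =>
      (Finset.ne_of_mem_erase hC) (part_block_unique hP hCP hv h (Finset.mem_singleton_self v))
    refine Finset.mem_erase.mpr ⟨?_, Finset.mem_image.mpr ⟨C, hCP, (Finset.erase_eq_of_notMem hvC)⟩⟩
    intro h
    obtain ⟨z, hz⟩ := hP.1 C hCP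
    rw [h] at hz
    exact Finset.notMem_empty z hz

lemma card_erase_image_nonsing {G : Finset ℕ} {P : Finset (Finset ℕ)} (hP : IsPartitionOf G P)
    {v : ℕ} (hns : ({v} : Finset ℕ) ∉ P) :
    ((P.image fun B => B.erase v).erase ∅).card = P.card := by
  have hnoempty : ∅ ∉ P.image fun B => B.erase v := by
    intro h
    obtain ⟨B, hB, hBe⟩ := Finset.mem_image.mp h
    by_cases hvB : v ∈ B
    · obtain ⟨B', _, hxB', z, hzB', hzv⟩ := nonsingleton_block hP (hP.2.1 B hB hvB) hns
      have hBB' : B' = B := part_block_unique hP ‹B' ∈ P› hB hxB' hvB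
      have : z ∈ B.erase v := Finset.mem_erase.mpr ⟨hzv, hBB' ▸ hzB'⟩
      rw [hBe] at this
      exact Finset.notMem_empty z this
    · rw [Finset.erase_eq_of_notMem hvB] at hBe
      obtain ⟨z, hz⟩ := hP.1 B hB
      rw [hBe] at hz
      exact Finset.notMem_empty z hz
  rw [Finset.erase_eq_of_notMem hnoempty]
  apply Finset.card_image_of_injOn
  intro B₁ hB₁' B₂ hB₂' heq
  have hB₁ : B₁ ∈ P := Finset.mem_coe.mp hB₁'
  have hB₂ : B₂ ∈ P := Finset.mem_coe.mp hB₂'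
  dsimp only at heq
  by_cases h1 : v ∈ B₁ <;> by_cases h2 : v ∈ B₂
  · exact part_block_unique hP hB₁ hB₂ h1 h2
  · exfalso
    obtain ⟨z, hz⟩ := hP.1 B₂ hB₂
    have hzv : z ≠ v := fun h => h2 (h ▸ hz)
    have hz1 : z ∈ B₁ := by
      have hzz : z ∈ B₂.erase v := Finset.mem_erase.mpr ⟨hzv, hz⟩
      rw [← heq] at hzz
      exact Finset.mem_of_mem_erase hzz
    have hee := part_block_unique hP hB₁ hB₂ hz1 hz
    rw [hee] at h1; exact h2 h1
  · exfalso
    obtain ⟨z, hz⟩ := hP.1 B₁ hB₁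
    have hzv : z ≠ v := fun h => h1 (h ▸ hz)
    have hz2 : z ∈ B₂ := by
      have hzz : z ∈ B₁.erase v := Finset.mem_erase.mpr ⟨hzv, hz⟩
      rw [heq] at hzz
      exact Finset.mem_of_mem_erase hzz
    have hee := part_block_unique hP hB₁ hB₂ hz hz2
    rw [← hee] at h2; exact h1 h2
  · rw [Finset.erase_eq_of_notMem h1, Finset.erase_eq_of_notMem h2] at heq
    exact heq

-- C1 : if {x} is a singleton block of σ then the dual blocks of the two evens
-- (cyclically) adjacent to x coincide.
lemma C1 {n : ℕ} {σ σd : Finset (Finset ℕ)} (hp : IsNCPair n σ σd) {x : ℕ}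
    (hxσ : ({x} : Finset ℕ) ∈ σ) {Cl Cr : Finset ℕ} (hCl : Cl ∈ σd) (hCr : Cr ∈ σd)
    (hlCl : (if x = 1 then 2 * n else x - 1) ∈ Cl) (hrCr : x + 1 ∈ Cr) : Cl = Cr := by
  obtain ⟨hσ, hσNC, hσd, hσdNC, hNCu, hcard⟩ := hp
  have hxO : x ∈ oddSet n := hσ.2.1 _ hxσ (Finset.mem_singleton_self x)
  have hn1 : 1 ≤ n := by have := mem_oddSet.mp hxO; omega
  by_contra hne
  set ρ := insert (Cl ∪ Cr) ((σd.erase Cl).erase Cr) with hρ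
  have hρpart : IsPartitionOf (evenSet n) ρ := partition_merge hσd hCl hCr hne
  have hρcard : ρ.card = σd.card - 1 := card_merge hσd hCl hCr hne
  have hM := lemmaM hσ hσd hNCu hxO hCl hCr hlCl hrCr
  have key : ∀ {B : Finset ℕ}, B ∈ σ ∪ ρ → ∀ {z w : ℕ}, z ∈ B → w ∈ B → z < w →
      B ∈ ((σ.image fun B => B.erase x).erase ∅) ∪ ρ := by
    intro B hB z w hz hw hzw
    rcases Finset.mem_union.mp hB with hB | hB
    · by_cases hBx : B = {x}
      · exfalso
        rw [hBx, Finset.mem_singleton] at hz hw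
        omega
      · have hxB : x ∉ B := fun h =>
          hBx (part_block_unique hσ hB hxσ h (Finset.mem_singleton_self x))
        refine Finset.mem_union_left _ (Finset.mem_erase.mpr ⟨?_, ?_⟩)
        · intro h
          rw [h] at hz
          exact Finset.notMem_empty z hz
        · exact Finset.mem_image.mpr ⟨B, hB, Finset.erase_eq_of_notMem hxB⟩
    · exact Finset.mem_union_right _ hB
  have hNCρ : NonCrossing (σ ∪ ρ) := by
    intro a b c d hab hbc hcd B₁ hB₁ B₂ hB₂ ha hc hb hd
    exact hM a b c d hab hbc hcd B₁ (key hB₁ ha hc (lt_trans hab hbc)) B₂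
      (key hB₂ hb hd (lt_trans hbc hcd)) ha hc hb hd
  have hunion : IsPartitionOf (fullSet n) (σ ∪ ρ) := partition_union hσ hρpart
  have hsplit : ∀ B ∈ σ ∪ ρ, B ⊆ oddSet n ∨ B ⊆ evenSet n := by
    intro B hB
    rcases Finset.mem_union.mp hB with hB | hB
    exacts [Or.inl (hσ.2.1 B hB), Or.inr (hρpart.2.1 B hB)]
  have hLB := LB n hn1 (σ ∪ ρ) hunion hNCρ hsplit
  have hcu : (σ ∪ ρ).card = σ.card + ρ.card := card_union_parts hσ hρpart
  have hσd1 : 1 ≤ σd.card := Finset.card_pos.mpr ⟨Cl, hCl⟩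
  omega

lemma noempty_erase_image {G : Finset ℕ} {P : Finset (Finset ℕ)} (hP : IsPartitionOf G P)
    {v : ℕ} (hns : ({v} : Finset ℕ) ∉ P) : ∅ ∉ P.image (fun B => B.erase v) := by
  intro h
  obtain ⟨B, hB, hBe⟩ := Finset.mem_image.mp h
  by_cases hvB : v ∈ B
  · obtain ⟨B', hB'P, hxB', z, hzB', hzv⟩ := nonsingleton_block hP (hP.2.1 B hB hvB) hns
    have hBB' : B' = B := part_block_unique hP hB'P hB hxB' hvB
    have hz2 : z ∈ B.erase v := Finset.mem_erase.mpr ⟨hzv, hBB' ▸ hzB'⟩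
    rw [hBe] at hz2
    exact Finset.notMem_empty z hz2
  · rw [Finset.erase_eq_of_notMem hvB] at hBe
    obtain ⟨z, hz⟩ := hP.1 B hB
    rw [hBe] at hz
    exact Finset.notMem_empty z hz

lemma image_erase_of_even_not_mem {n : ℕ} {σ : Finset (Finset ℕ)}
    (hσ : IsPartitionOf (oddSet n) σ) {r : ℕ} (hr : r % 2 = 0) :
    σ.image (fun B => B.erase r) = σ := by
  have hkey : ∀ B ∈ σ, r ∉ B := by
    intro B hB h
    have := mem_oddSet.mp (hσ.2.1 B hB h)
    omega
  ext C
  simp only [Finset.mem_image]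
  constructor
  · rintro ⟨B, hB, rfl⟩
    rw [Finset.erase_eq_of_notMem (hkey B hB)]
    exact hB
  · intro hC
    exact ⟨C, hC, Finset.erase_eq_of_notMem (hkey C hC)⟩

lemma Dstep {n : ℕ} (hn : 2 ≤ n) {τ τd σ σd : Finset (Finset ℕ)}
    (hτp : IsNCPair n τ τd) (hσp : IsNCPair n σ σd)
    (hcard : τ.card + σ.card = n + 1) (hconn : ConnOn (oddSet n) τ σ)
    {x : ℕ} (hxσ : ({x} : Finset ℕ) ∈ σ)
    (IH : ∀ τ' τd' σ' σd' : Finset (Finset ℕ), IsNCPair (n-1) τ' τd' → IsNCPair (n-1) σ' σd' →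
      τ'.card + σ'.card = (n-1) + 1 → ConnOn (oddSet (n-1)) τ' σ' →
      ConnOn (evenSet (n-1)) τd' σd') :
    ConnOn (evenSet n) τd σd := by
  classical
  obtain ⟨hτ, hτNC, hτd, hτdNC, hτNCu, hτcard⟩ := hτp
  obtain ⟨hσ, hσNC, hσd, hσdNC, hσNCu, hσcard⟩ := hσp
  have hxO : x ∈ oddSet n := hσ.2.1 _ hxσ (Finset.mem_singleton_self x)
  have hxodd := mem_oddSet.mp hxO
  set l := if x = 1 then 2 * n else x - 1 with hldef
  set r := x + 1 with hrdef
  have hrE : r ∈ evenSet n := mem_evenSet.mpr ⟨by omega, by omega, by omega⟩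
  have hlE : l ∈ evenSet n := by
    rw [hldef]; split_ifs with h
    · exact mem_evenSet.mpr ⟨by omega, by omega, by omega⟩
    · exact mem_evenSet.mpr ⟨by omega, by omega, by omega⟩
  have hlr : l ≠ r := by rw [hldef, hrdef]; split_ifs with h <;> omega
  -- x is not a singleton of τ
  have hxτ : ({x} : Finset ℕ) ∉ τ := by
    intro hxτ
    obtain ⟨y, hy, hyx⟩ : ∃ y ∈ oddSet n, y ≠ x := by
      by_cases h1 : x = 1
      · exact ⟨3, mem_oddSet.mpr ⟨by omega, by omega⟩, by omega⟩
      · exact ⟨1, mem_oddSet.mpr ⟨by omega, by omega⟩, fun h => h1 h.symm⟩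
    exact not_connOn_isolated hτ hσ hxτ hxσ hy hyx hconn
  obtain ⟨B, hB, hxB, b₀, hb₀, hb₀x⟩ := nonsingleton_block hτ hxO hxτ
  have hb₀O := mem_oddSet.mp (hτ.2.1 B hB hb₀)
  -- dual blocks of l and r in σd coincide (C1)
  obtain ⟨Crσ, hCrσ, hrCrσ⟩ := part_exists_block hσd hrE
  obtain ⟨Clσ, hClσ, hlClσ⟩ := part_exists_block hσd hlE
  have hC1 : Clσ = Crσ :=
    C1 ⟨hσ, hσNC, hσd, hσdNC, hσNCu, hσcard⟩ hxσ hClσ hCrσ hlClσ hrCrσ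
  have hlCrσ : l ∈ Crσ := hC1 ▸ hlClσ
  -- dual blocks of l and r in τd are distinct
  obtain ⟨Cr, hCr, hrCr⟩ := part_exists_block hτd hrE
  obtain ⟨Cl, hCl, hlCl⟩ := part_exists_block hτd hlE
  have hClCr : Cl ≠ Cr := by
    intro heq
    subst heq
    have hBu : B ∈ τ ∪ τd := Finset.mem_union_left _ hB
    have hClu : Cl ∈ τ ∪ τd := Finset.mem_union_right _ hCl
    have hBodd : B ⊆ oddSet n := hτ.2.1 B hB
    have hpar : B ≠ Cl := by
      intro h
      exact odd_even_disj (hBodd hxB) (hτd.2.1 Cl hCl (h ▸ hxB))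
    by_cases h1 : x = 1
    · have hlv : l = 2 * n := by rw [hldef, if_pos h1]
      have hb₀3 : 3 ≤ b₀ ∧ b₀ < 2 * n := by omega
      exact hpar (hτNCu x r b₀ l (by omega) (by omega) (by omega) B hBu Cl hClu
        (h1 ▸ hxB) hb₀ hrCr (hlv ▸ hlCl))
    · have hlv : l = x - 1 := by rw [hldef, if_neg h1]
      rcases Nat.lt_or_ge b₀ x with hblt | hbge
      · have hb₀l : b₀ < l := by omega
        exact hpar (hτNCu b₀ l x r (by omega) (by omega) (by omega)
          B hBu Cl hClu hb₀ hxB hlCl hrCr)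
      · have hb₀r : r < b₀ := by omega
        exact hpar (hτNCu l x r b₀ (by omega) (by omega) hb₀r Cl hClu B hBu
          hlCl hrCr hxB hb₀).symm
  -- reduced structures
  set Md := insert (Cl ∪ Cr) ((τd.erase Cl).erase Cr) with hMd
  have hMdpart : IsPartitionOf (evenSet n) Md := partition_merge hτd hCl hCr hClCr
  have hMdcard : Md.card = τd.card - 1 := card_merge hτd hCl hCr hClCr
  set τh := (τ.image fun B => B.erase x).erase ∅ with hτh
  set σh := σ.erase {x} with hσh
  set τhd := (Md.image fun C => C.erase r).erase ∅ with hτhd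
  set σhd := (σd.image fun C => C.erase r).erase ∅ with hσhd
  -- r is not a singleton block on either dual side
  have hrσd : ({r} : Finset ℕ) ∉ σd := by
    intro h
    have := part_block_unique hσd hCrσ h hrCrσ (Finset.mem_singleton_self r)
    rw [this, Finset.mem_singleton] at hlCrσ
    exact hlr hlCrσ
  have hrMd : ({r} : Finset ℕ) ∉ Md := by
    intro h
    rcases Finset.mem_insert.mp h with h | h
    · have : l ∈ ({r} : Finset ℕ) := h ▸ Finset.mem_union_left _ hlCl
      rw [Finset.mem_singleton] at this
      exact hlr this
    · have hDτd := Finset.mem_of_mem_erase (Finset.mem_of_mem_erase h)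
      have := part_block_unique hτd hDτd hCr (Finset.mem_singleton_self r) hrCr
      exact (Finset.ne_of_mem_erase h) this
  -- partitions of the reduced grounds
  have hτhpart : IsPartitionOf ((oddSet n).erase x) τh := partition_erase_point hτ x
  have hσhpart : IsPartitionOf ((oddSet n).erase x) σh := partition_remove_singleton hσ hxσ
  have hτhdpart : IsPartitionOf ((evenSet n).erase r) τhd := partition_erase_point hMdpart r
  have hσhdpart : IsPartitionOf ((evenSet n).erase r) σhd := partition_erase_point hσd r
  -- cards
  have hcardτh : τh.card = τ.card := card_erase_image_nonsing hτ hxτ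
  have hcardσh : σh.card = σ.card - 1 := Finset.card_erase_of_mem hxσ
  have hcardτhd : τhd.card = τd.card - 1 := by
    rw [hτhd, card_erase_image_nonsing hMdpart hrMd, hMdcard]
  have hcardσhd : σhd.card = σd.card := card_erase_image_nonsing hσd hrσd

  -- noncrossing of the reduced unions
  have hM := lemmaM hτ hτd hτNCu hxO hCl hCr hlCl hrCr
  have hτhNCu : NonCrossing (τh ∪ τhd) := by
    have key : ∀ {C : Finset ℕ}, C ∈ τh ∪ τhd → ∃ D, D ∈ τh ∪ Md ∧ C = D.erase r := by
      intro C hC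
      rcases Finset.mem_union.mp hC with hC | hC
      · refine ⟨C, Finset.mem_union_left _ hC, ?_⟩
        have hrC : r ∉ C := by
          intro h
          obtain ⟨D', hD', rfl⟩ := Finset.mem_image.mp (Finset.mem_of_mem_erase hC)
          have := mem_oddSet.mp (hτ.2.1 D' hD' (Finset.mem_of_mem_erase h))
          omega
        rw [Finset.erase_eq_of_notMem hrC]
      · obtain ⟨D, hD, rfl⟩ := Finset.mem_image.mp (Finset.mem_of_mem_erase hC)
        exact ⟨D, Finset.mem_union_right _ hD, rfl⟩
    intro a b c d hab hbc hcd B₁ hB₁ B₂ hB₂ ha hc hb hd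
    obtain ⟨D₁, hD₁, rfl⟩ := key hB₁
    obtain ⟨D₂, hD₂, rfl⟩ := key hB₂
    rw [hM a b c d hab hbc hcd D₁ hD₁ D₂ hD₂ (Finset.mem_of_mem_erase ha)
      (Finset.mem_of_mem_erase hc) (Finset.mem_of_mem_erase hb) (Finset.mem_of_mem_erase hd)]
  have hσhNCu : NonCrossing (σh ∪ σhd) := by
    have key : ∀ {C : Finset ℕ}, C ∈ σh ∪ σhd → ∃ D, D ∈ σ ∪ σd ∧ C = D.erase r := by
      intro C hC
      rcases Finset.mem_union.mp hC with hC | hC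
      · refine ⟨C, Finset.mem_union_left _ (Finset.mem_of_mem_erase hC), ?_⟩
        have hrC : r ∉ C := by
          intro h
          have := mem_oddSet.mp (hσ.2.1 C (Finset.mem_of_mem_erase hC) h)
          omega
        rw [Finset.erase_eq_of_notMem hrC]
      · obtain ⟨D, hD, rfl⟩ := Finset.mem_image.mp (Finset.mem_of_mem_erase hC)
        exact ⟨D, Finset.mem_union_right _ hD, rfl⟩
    intro a b c d hab hbc hcd B₁ hB₁ B₂ hB₂ ha hc hb hd
    obtain ⟨D₁, hD₁, rfl⟩ := key hB₁
    obtain ⟨D₂, hD₂, rfl⟩ := key hB₂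
    rw [hσNCu a b c d hab hbc hcd D₁ hD₁ D₂ hD₂ (Finset.mem_of_mem_erase ha)
      (Finset.mem_of_mem_erase hc) (Finset.mem_of_mem_erase hb) (Finset.mem_of_mem_erase hd)]
  -- grounds as sdiffs
  have hgO : (oddSet n).erase x = oddSet n \ {x, x + 1} := by
    ext z
    rw [Finset.mem_erase, Finset.mem_sdiff, Finset.mem_insert, Finset.mem_singleton]
    constructor
    · rintro ⟨hzx, hz⟩
      have := mem_oddSet.mp hz
      exact ⟨hz, by omega⟩
    · rintro ⟨hz, hor⟩
      exact ⟨by tauto, hz⟩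
  have hgE : (evenSet n).erase r = evenSet n \ {x, x + 1} := by
    ext z
    rw [Finset.mem_erase, Finset.mem_sdiff, Finset.mem_insert, Finset.mem_singleton]
    constructor
    · rintro ⟨hzr, hz⟩
      have := mem_evenSet.mp hz
      refine ⟨hz, ?_⟩
      rw [hrdef] at hzr
      omega
    · rintro ⟨hz, hor⟩
      have := mem_evenSet.mp hz
      constructor
      · rw [hrdef]; omega
      · exact hz
  have hOsub : ↑((oddSet n).erase x) ⊆ cSet x := by rw [hgO]; exact sdiff_subset_cSet _
  have hEsub : ↑((evenSet n).erase r) ⊆ cSet x := by rw [hgE]; exact sdiff_subset_cSet _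
  have hOimg : ((oddSet n).erase x).image (cmap x) = oddSet (n - 1) := by
    rw [hgO, image_cmap_oddSet (by omega) (by omega)]
  have hEimg : ((evenSet n).erase r).image (cmap x) = evenSet (n - 1) := by
    rw [hgE, image_cmap_evenSet (by omega) (by omega)]
  -- collapsed structures
  set τt := τh.image (Finset.image (cmap x)) with hτt
  set σt := σh.image (Finset.image (cmap x)) with hσt
  set τtd := τhd.image (Finset.image (cmap x)) with hτtd
  set σtd := σhd.image (Finset.image (cmap x)) with hσtd
  have hτtpart : IsPartitionOf (oddSet (n - 1)) τt := by
    have := partition_image (cmap_injOn x) hOsub hτhpart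
    rwa [hOimg] at this
  have hσtpart : IsPartitionOf (oddSet (n - 1)) σt := by
    have := partition_image (cmap_injOn x) hOsub hσhpart
    rwa [hOimg] at this
  have hτtdpart : IsPartitionOf (evenSet (n - 1)) τtd := by
    have := partition_image (cmap_injOn x) hEsub hτhdpart
    rwa [hEimg] at this
  have hσtdpart : IsPartitionOf (evenSet (n - 1)) σtd := by
    have := partition_image (cmap_injOn x) hEsub hσhdpart
    rwa [hEimg] at this
  have hτblocks : ∀ B ∈ τh ∪ τhd, ↑B ⊆ cSet x := by
    intro B hBm z hz
    rcases Finset.mem_union.mp hBm with h | h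
    · exact hOsub (Finset.mem_coe.mpr (hτhpart.2.1 B h (Finset.mem_coe.mp hz)))
    · exact hEsub (Finset.mem_coe.mpr (hτhdpart.2.1 B h (Finset.mem_coe.mp hz)))
  have hσblocks : ∀ B ∈ σh ∪ σhd, ↑B ⊆ cSet x := by
    intro B hBm z hz
    rcases Finset.mem_union.mp hBm with h | h
    · exact hOsub (Finset.mem_coe.mpr (hσhpart.2.1 B h (Finset.mem_coe.mp hz)))
    · exact hEsub (Finset.mem_coe.mpr (hσhdpart.2.1 B h (Finset.mem_coe.mp hz)))
  have hτtNCu : NonCrossing (τt ∪ τtd) := by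
    rw [hτt, hτtd, ← Finset.image_union]
    exact nc_image_mono (fun a ha b hb => cmap_lt_iff ha hb) hτblocks hτhNCu
  have hσtNCu : NonCrossing (σt ∪ σtd) := by
    rw [hσt, hσtd, ← Finset.image_union]
    exact nc_image_mono (fun a ha b hb => cmap_lt_iff ha hb) hσblocks hσhNCu
  have hcardτt : τt.card = τ.card := by
    rw [hτt, card_partition_image (cmap_injOn x) hOsub hτhpart, hcardτh]
  have hcardσt : σt.card = σ.card - 1 := by
    rw [hσt, card_partition_image (cmap_injOn x) hOsub hσhpart, hcardσh]
  have hcardτtd : τtd.card = τd.card - 1 := by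
    rw [hτtd, card_partition_image (cmap_injOn x) hEsub hτhdpart, hcardτhd]
  have hcardσtd : σtd.card = σd.card := by
    rw [hσtd, card_partition_image (cmap_injOn x) hEsub hσhdpart, hcardσhd]
  have hσd1 : 1 ≤ σd.card := Finset.card_pos.mpr ⟨Crσ, hCrσ⟩
  have hτd1 : 1 ≤ τd.card := Finset.card_pos.mpr ⟨Cr, hCr⟩
  have hσ1 : 1 ≤ σ.card := Finset.card_pos.mpr ⟨{x}, hxσ⟩
  have hτt_pair : IsNCPair (n - 1) τt τtd :=
    ⟨hτtpart, nc_subset Finset.subset_union_left hτtNCu, hτtdpart,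
      nc_subset Finset.subset_union_right hτtNCu, hτtNCu, by omega⟩
  have hσt_pair : IsNCPair (n - 1) σt σtd :=
    ⟨hσtpart, nc_subset Finset.subset_union_left hσtNCu, hσtdpart,
      nc_subset Finset.subset_union_right hσtNCu, hσtNCu, by omega⟩
  -- reduced primal connectivity
  have hconnh : ConnOn ((oddSet n).erase x) σh (τ.image fun C => C.erase x) :=
    connOn_excise hσ hτ hxσ hB hxB hb₀ hb₀x (connOn_comm hconn)
  have hτheq : τh = τ.image fun C => C.erase x :=
    Finset.erase_eq_of_notMem (noempty_erase_image hτ hxτ)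
  rw [← hτheq] at hconnh
  have hconnt : ConnOn (oddSet (n - 1)) τt σt := by
    have := connOn_image (cmap x) (connOn_comm hconnh)
    rwa [hOimg] at this
  -- apply the induction hypothesis
  have hconntd : ConnOn (evenSet (n - 1)) τtd σtd :=
    IH τt τtd σt σtd hτt_pair hσt_pair (by omega) hconnt
  -- pull back to the reduced even ground
  have hconnhd : ConnOn ((evenSet n).erase r) τhd σhd := by
    apply connOn_preimage (cmap_injOn x) hEsub hτhdpart hσhdpart
    rwa [hEimg]
  -- lift to the original even ground
  have liftstep : ∀ a b, pstep τhd σhd a b → Relation.ReflTransGen (pstep τd σd) a b := by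
    intro a b hab
    obtain ⟨B', hB', haB, hbB⟩ := hab
    rcases hB' with hB' | hB'
    · obtain ⟨D, hD, rfl⟩ := Finset.mem_image.mp (Finset.mem_of_mem_erase hB')
      rcases Finset.mem_insert.mp hD with rfl | hD
      · have haD := Finset.mem_of_mem_erase haB
        have hbD := Finset.mem_of_mem_erase hbB
        rcases Finset.mem_union.mp haD with haCl | haCr <;>
          rcases Finset.mem_union.mp hbD with hbCl | hbCr
        · exact ReflTransGen.single ⟨Cl, Or.inl hCl, haCl, hbCl⟩
        · exact (ReflTransGen.single ⟨Cl, Or.inl hCl, haCl, hlCl⟩).trans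
            ((ReflTransGen.single ⟨Crσ, Or.inr hCrσ, hlCrσ, hrCrσ⟩).trans
              (ReflTransGen.single ⟨Cr, Or.inl hCr, hrCr, hbCr⟩))
        · exact (ReflTransGen.single ⟨Cr, Or.inl hCr, haCr, hrCr⟩).trans
            ((ReflTransGen.single ⟨Crσ, Or.inr hCrσ, hrCrσ, hlCrσ⟩).trans
              (ReflTransGen.single ⟨Cl, Or.inl hCl, hlCl, hbCl⟩))
        · exact ReflTransGen.single ⟨Cr, Or.inl hCr, haCr, hbCr⟩
      · exact ReflTransGen.single ⟨D, Or.inl (Finset.mem_of_mem_erase (Finset.mem_of_mem_erase hD)),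
          Finset.mem_of_mem_erase haB, Finset.mem_of_mem_erase hbB⟩
    · obtain ⟨C, hC, rfl⟩ := Finset.mem_image.mp (Finset.mem_of_mem_erase hB')
      exact ReflTransGen.single ⟨C, Or.inr hC, Finset.mem_of_mem_erase haB,
        Finset.mem_of_mem_erase hbB⟩
  intro u hu v hv
  have hmem : ∀ w, w ∈ evenSet n → (if w = r then l else w) ∈ (evenSet n).erase r := by
    intro w hw
    split_ifs with h
    · exact Finset.mem_erase.mpr ⟨hlr, hlE⟩
    · exact Finset.mem_erase.mpr ⟨h, hw⟩
  have hcore := hconnhd _ (hmem u hu) _ (hmem v hv)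
  have hlift : Relation.ReflTransGen (pstep τd σd) (if u = r then l else u)
      (if v = r then l else v) := by
    have := rtg_lift (r := pstep τhd σhd) (s := pstep τd σd) id
      (fun a b h => liftstep a b h) hcore
    simpa using this
  have hbr : Relation.ReflTransGen (pstep τd σd) r l :=
    ReflTransGen.single ⟨Crσ, Or.inr hCrσ, hrCrσ, hlCrσ⟩
  have hbl : Relation.ReflTransGen (pstep τd σd) l r :=
    ReflTransGen.single ⟨Crσ, Or.inr hCrσ, hlCrσ, hrCrσ⟩
  by_cases huv : u = r <;> by_cases hvv : v = r
  · rw [huv, hvv]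
  · rw [huv]
    refine hbr.trans ?_
    rw [huv] at hlift
    simpa [hvv] using hlift
  · rw [hvv]
    refine Relation.ReflTransGen.trans ?_ hbl
    rw [hvv] at hlift
    simpa [huv] using hlift
  · simpa [huv, hvv] using hlift

lemma Dcore : ∀ n : ℕ, ∀ τ τd σ σd : Finset (Finset ℕ), IsNCPair n τ τd → IsNCPair n σ σd →
    τ.card + σ.card = n + 1 → ConnOn (oddSet n) τ σ → ConnOn (evenSet n) τd σd := by
  intro n
  induction n using Nat.strong_induction_on with
  | _ n IH =>
  intro τ τd σ σd hτp hσp hcard hconn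
  rcases Nat.lt_or_ge n 2 with hn | hn
  · intro u hu v hv
    have hu' := mem_evenSet.mp hu
    have hv' := mem_evenSet.mp hv
    have huv : u = v := by omega
    rw [huv]
  · have hIH : ∀ τ' τd' σ' σd' : Finset (Finset ℕ), IsNCPair (n-1) τ' τd' →
        IsNCPair (n-1) σ' σd' → τ'.card + σ'.card = (n-1) + 1 →
        ConnOn (oddSet (n-1)) τ' σ' → ConnOn (evenSet (n-1)) τd' σd' :=
      fun a b c d h1 h2 h3 h4 => IH (n-1) (by omega) a b c d h1 h2 h3 h4
    obtain ⟨x, hx⟩ := exists_singleton_block hτp.1 hσp.1 (by rw [card_oddSet]; omega)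
    rcases hx with hx | hx
    · exact connOn_comm (Dstep hn hσp hτp (by omega) (connOn_comm hconn) hx hIH)
    · exact Dstep hn hτp hσp hcard hconn hx hIH

-- mirror machinery
def mSet (n : ℕ) : Set ℕ := {y : ℕ | 1 ≤ y ∧ y ≤ 2 * n}

lemma mmap_anti {n : ℕ} : ∀ a ∈ mSet n, ∀ b ∈ mSet n,
    a < b ↔ (fun y => 2 * n + 1 - y) b < (fun y => 2 * n + 1 - y) a := by
  intro a ha b hb
  obtain ⟨ha1, ha2⟩ := ha
  obtain ⟨hb1, hb2⟩ := hb
  simp only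
  omega

lemma mmap_injOn {n : ℕ} : Set.InjOn (fun y => 2 * n + 1 - y) (mSet n) := by
  intro a ha b hb h
  obtain ⟨ha1, ha2⟩ := ha
  obtain ⟨hb1, hb2⟩ := hb
  simp only at h
  omega

lemma oddSet_sub_mSet {n : ℕ} : ↑(oddSet n) ⊆ mSet n := by
  intro z hz
  have := mem_oddSet.mp (Finset.mem_coe.mp hz)
  exact ⟨by omega, by omega⟩

lemma evenSet_sub_mSet {n : ℕ} : ↑(evenSet n) ⊆ mSet n := by
  intro z hz
  have := mem_evenSet.mp (Finset.mem_coe.mp hz)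
  exact ⟨by omega, by omega⟩

lemma image_m_oddSet {n : ℕ} : (oddSet n).image (fun y => 2 * n + 1 - y) = evenSet n := by
  apply Finset.Subset.antisymm
  · intro y hy
    obtain ⟨z, hz, rfl⟩ := Finset.mem_image.mp hy
    have := mem_oddSet.mp hz
    exact mem_evenSet.mpr ⟨by omega, by omega, by omega⟩
  · intro y hy
    have := mem_evenSet.mp hy
    exact Finset.mem_image.mpr ⟨2 * n + 1 - y, mem_oddSet.mpr ⟨by omega, by omega⟩, by omega⟩

lemma image_m_evenSet {n : ℕ} : (evenSet n).image (fun y => 2 * n + 1 - y) = oddSet n := by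
  apply Finset.Subset.antisymm
  · intro y hy
    obtain ⟨z, hz, rfl⟩ := Finset.mem_image.mp hy
    have := mem_evenSet.mp hz
    exact mem_oddSet.mpr ⟨by omega, by omega⟩
  · intro y hy
    have := mem_oddSet.mp hy
    exact Finset.mem_image.mpr ⟨2 * n + 1 - y, mem_evenSet.mpr ⟨by omega, by omega, by omega⟩,
      by omega⟩

lemma mirror_pair {n : ℕ} {σ σd : Finset (Finset ℕ)} (h : IsNCPair n σ σd) :
    IsNCPair n (σd.image (Finset.image fun y => 2 * n + 1 - y))
      (σ.image (Finset.image fun y => 2 * n + 1 - y)) := by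
  obtain ⟨hσ, hσNC, hσd, hσdNC, hNCu, hcard⟩ := h
  have hblocks : ∀ B ∈ σ ∪ σd, ↑B ⊆ mSet n := by
    intro B hB z hz
    rcases Finset.mem_union.mp hB with h | h
    · exact oddSet_sub_mSet (Finset.mem_coe.mpr (hσ.2.1 B h (Finset.mem_coe.mp hz)))
    · exact evenSet_sub_mSet (Finset.mem_coe.mpr (hσd.2.1 B h (Finset.mem_coe.mp hz)))
  have hNCu' : NonCrossing ((σd.image (Finset.image fun y => 2 * n + 1 - y)) ∪
      (σ.image (Finset.image fun y => 2 * n + 1 - y))) := by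
    rw [← Finset.image_union]
    apply nc_image_anti mmap_anti
    · intro B hB
      exact hblocks B (Finset.union_comm σ σd ▸ hB)
    · intro a b c d hab hbc hcd B₁ h₁ B₂ h₂ ha hc hb hd
      exact hNCu a b c d hab hbc hcd B₁ (Finset.union_comm σd σ ▸ h₁) B₂
        (Finset.union_comm σd σ ▸ h₂) ha hc hb hd
  refine ⟨?_, nc_subset Finset.subset_union_left hNCu',
    ?_, nc_subset Finset.subset_union_right hNCu', hNCu', ?_⟩
  · have := partition_image mmap_injOn evenSet_sub_mSet hσd
    rwa [image_m_evenSet] at this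
  · have := partition_image mmap_injOn oddSet_sub_mSet hσ
    rwa [image_m_oddSet] at this
  · rw [card_partition_image mmap_injOn evenSet_sub_mSet hσd,
      card_partition_image mmap_injOn oddSet_sub_mSet hσ]
    omega

lemma Dcore_rev {n : ℕ} {τ τd σ σd : Finset (Finset ℕ)}
    (hτp : IsNCPair n τ τd) (hσp : IsNCPair n σ σd)
    (hcard : τ.card + σ.card = n + 1) (hconn : ConnOn (evenSet n) τd σd) :
    ConnOn (oddSet n) τ σ := by
  have hτcard := hτp.2.2.2.2.2
  have hσcard := hσp.2.2.2.2.2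
  have h1 := Dcore n _ _ _ _ (mirror_pair hτp) (mirror_pair hσp)
    (by
      rw [card_partition_image mmap_injOn evenSet_sub_mSet hτp.2.2.1,
        card_partition_image mmap_injOn evenSet_sub_mSet hσp.2.2.1]
      omega)
    (by
      have := connOn_image (fun y => 2 * n + 1 - y) hconn
      rwa [image_m_evenSet] at this)
  apply connOn_preimage mmap_injOn oddSet_sub_mSet hτp.1 hσp.1
  rwa [image_m_oddSet]

lemma jc_iff {n : ℕ} {P Q : Finset (Finset ℕ)} :
    JoinConnected n P Q ↔ ConnOn (oddSet n) P Q := Iff.rfl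

lemma card_isolate {G : Finset ℕ} {P : Finset (Finset ℕ)} (hP : IsPartitionOf G P)
    {x : ℕ} (hns : ({x} : Finset ℕ) ∉ P) : (isolate P x).card = P.card + 1 := by
  have hnotin : ({x} : Finset ℕ) ∉ P.image (fun B => B.erase x) := by
    intro h
    obtain ⟨B, hB, hBe⟩ := Finset.mem_image.mp h
    have : x ∈ B.erase x := hBe ▸ Finset.mem_singleton_self x
    exact (Finset.notMem_erase x B) this
  rw [isolate, Finset.card_insert_of_notMem hnotin]
  have hnoe : (P.image fun B => B.erase x) = ((P.image fun B => B.erase x).erase ∅) :=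
    (Finset.erase_eq_of_notMem (noempty_erase_image hP hns)).symm
  rw [hnoe, card_erase_image_nonsing hP hns]

lemma mem_isolate_self {P : Finset (Finset ℕ)} (x : ℕ) : ({x} : Finset ℕ) ∈ isolate P x :=
  Finset.mem_insert_self _ _

theorem lam_generators_self_adjoint (n : ℕ) (hn : 2 ≤ n) (i : ℕ) (hi1 : 1 ≤ i) (hi2 : i ≤ 2 * n)
    (τ τd σ σd gτ gτd gσ gσd : Finset (Finset ℕ))
    (hτ : IsNCPair n τ τd) (hσ : IsNCPair n σ σd)
    (hgτp : IsNCPair n gτ gτd) (hgσp : IsNCPair n gσ gσd)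
    (hgτ : GRel i τ τd gτ gτd) (hgσ : GRel i σ σd gσ gσd) :
    (if ¬ IsolatedIn τ τd i then pairing n gτ σ else 0) =
      (if ¬ IsolatedIn σ σd i then pairing n τ gσ else 0) := by
  classical
  by_cases hodd : i % 2 = 1
  · -- odd generator index
    have hiO : i ∈ oddSet n := mem_oddSet.mpr ⟨hodd, by omega⟩
    have hIτ : IsolatedIn τ τd i ↔ ({i} : Finset ℕ) ∈ τ := by rw [IsolatedIn, if_pos hodd]
    have hIσ : IsolatedIn σ σd i ↔ ({i} : Finset ℕ) ∈ σ := by rw [IsolatedIn, if_pos hodd]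
    obtain ⟨y, hy, hyi⟩ : ∃ y ∈ oddSet n, y ≠ i := by
      by_cases h1 : i = 1
      · exact ⟨3, mem_oddSet.mpr ⟨by omega, by omega⟩, by omega⟩
      · exact ⟨1, mem_oddSet.mpr ⟨by omega, by omega⟩, fun h => h1 h.symm⟩
    by_cases hτiso : IsolatedIn τ τd i <;> by_cases hσiso : IsolatedIn σ σd i
    · simp [hτiso, hσiso]
    · -- τ isolated, σ not
      rw [if_neg (not_not_intro hτiso), if_pos hσiso]
      have hgσeq : gσ = isolate σ i := (hgσ.2 hσiso).1 hodd
      have hnc : ¬ JoinConnected n τ gσ := by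
        rw [jc_iff]
        exact not_connOn_isolated hτ.1 hgσp.1 (hIτ.mp hτiso)
          (hgσeq ▸ mem_isolate_self i) hy hyi
      rw [pairing, if_neg (fun hc => hnc hc.2)]
    · -- σ isolated, τ not
      rw [if_pos hτiso, if_neg (not_not_intro hσiso)]
      have hgτeq : gτ = isolate τ i := (hgτ.2 hτiso).1 hodd
      have hnc : ¬ JoinConnected n gτ σ := by
        rw [jc_iff]
        exact connOn_comm.mt (not_connOn_isolated hσ.1 hgτp.1 (hIσ.mp hσiso)
          (hgτeq ▸ mem_isolate_self i) hy hyi)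
      rw [pairing, if_neg (fun hc => hnc hc.2)]
    · -- neither isolated
      rw [if_pos hτiso, if_pos hσiso]
      have hgτeq : gτ = isolate τ i := (hgτ.2 hτiso).1 hodd
      have hgσeq : gσ = isolate σ i := (hgσ.2 hσiso).1 hodd
      have hiτ : ({i} : Finset ℕ) ∉ τ := fun h => hτiso (hIτ.mpr h)
      have hiσ : ({i} : Finset ℕ) ∉ σ := fun h => hσiso (hIσ.mpr h)
      have hequiv := iso_equiv hτ.1 hσ.1 hiO hiτ hiσ
      have hcτ := card_isolate hτ.1 hiτ
      have hcσ := card_isolate hσ.1 hiσ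
      rw [hgτeq, hgσeq, pairing, pairing]
      apply if_congr _ rfl rfl
      constructor
      · rintro ⟨hc, hj⟩
        exact ⟨by omega, (jc_iff.mpr (hequiv.mp (jc_iff.mp hj)))⟩
      · rintro ⟨hc, hj⟩
        exact ⟨by omega, (jc_iff.mpr (hequiv.mpr (jc_iff.mp hj)))⟩
  · -- even generator index
    have heven : i % 2 = 0 := by omega
    have hiE : i ∈ evenSet n := mem_evenSet.mpr ⟨heven, hi1, hi2⟩
    have hIτ : IsolatedIn τ τd i ↔ ({i} : Finset ℕ) ∈ τd := by rw [IsolatedIn, if_neg hodd]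
    have hIσ : IsolatedIn σ σd i ↔ ({i} : Finset ℕ) ∈ σd := by rw [IsolatedIn, if_neg hodd]
    obtain ⟨y, hy, hyi⟩ : ∃ y ∈ evenSet n, y ≠ i := by
      by_cases h1 : i = 2
      · exact ⟨4, mem_evenSet.mpr ⟨by omega, by omega, by omega⟩, by omega⟩
      · exact ⟨2, mem_evenSet.mpr ⟨by omega, by omega, by omega⟩, fun h => h1 h.symm⟩
    by_cases hτiso : IsolatedIn τ τd i <;> by_cases hσiso : IsolatedIn σ σd i
    · simp [hτiso, hσiso]
    · -- τ isolated, σ not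
      rw [if_neg (not_not_intro hτiso), if_pos hσiso]
      have hgσdeq : gσd = isolate σd i := (hgσ.2 hσiso).2 heven
      have hncE : ¬ ConnOn (evenSet n) τd gσd :=
        not_connOn_isolated hτ.2.2.1 hgσp.2.2.1 (hIτ.mp hτiso)
          (hgσdeq ▸ mem_isolate_self i) hy hyi
      rw [pairing, if_neg (fun h : τ.card + gσ.card = n + 1 ∧ JoinConnected n τ gσ =>
        hncE (Dcore n τ τd gσ gσd hτ hgσp h.1 (jc_iff.mp h.2)))]
    · -- σ isolated, τ not
      rw [if_pos hτiso, if_neg (not_not_intro hσiso)]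
      have hgτdeq : gτd = isolate τd i := (hgτ.2 hτiso).2 heven
      have hncE : ¬ ConnOn (evenSet n) gτd σd :=
        not_connOn_isolated hgτp.2.2.1 hσ.2.2.1 (hgτdeq ▸ mem_isolate_self i)
          (hIσ.mp hσiso) hy hyi
      rw [pairing, if_neg (fun h : gτ.card + σ.card = n + 1 ∧ JoinConnected n gτ σ =>
        hncE (Dcore n gτ gτd σ σd hgτp hσ h.1 (jc_iff.mp h.2)))]
    · -- neither isolated
      rw [if_pos hτiso, if_pos hσiso]
      have hgτdeq : gτd = isolate τd i := (hgτ.2 hτiso).2 heven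
      have hgσdeq : gσd = isolate σd i := (hgσ.2 hσiso).2 heven
      have hiτd : ({i} : Finset ℕ) ∉ τd := fun h => hτiso (hIτ.mpr h)
      have hiσd : ({i} : Finset ℕ) ∉ σd := fun h => hσiso (hIσ.mpr h)
      have hcτd := card_isolate hτ.2.2.1 hiτd
      have hcσd := card_isolate hσ.2.2.1 hiσd
      have hτc := hτ.2.2.2.2.2
      have hσc := hσ.2.2.2.2.2
      have hgτc := hgτp.2.2.2.2.2
      have hgσc := hgσp.2.2.2.2.2
      rw [hgτdeq] at hgτc
      rw [hgσdeq] at hgσc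
      have hequiv := iso_equiv hτ.2.2.1 hσ.2.2.1 hiE hiτd hiσd
      rw [pairing, pairing]
      apply if_congr _ rfl rfl
      constructor
      · rintro ⟨hc, hj⟩
        have hE : ConnOn (evenSet n) gτd σd := Dcore n gτ gτd σ σd hgτp hσ hc (jc_iff.mp hj)
        rw [hgτdeq] at hE
        have hE2 : ConnOn (evenSet n) τd gσd := by
          rw [hgσdeq]
          exact hequiv.mp hE
        have hcard2 : τ.card + gσ.card = n + 1 := by omega
        exact ⟨hcard2, jc_iff.mpr (Dcore_rev hτ hgσp hcard2 hE2)⟩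
      · rintro ⟨hc, hj⟩
        have hE : ConnOn (evenSet n) τd gσd := Dcore n τ τd gσ gσd hτ hgσp hc (jc_iff.mp hj)
        rw [hgσdeq] at hE
        have hE2 : ConnOn (evenSet n) gτd σd := by
          rw [hgτdeq]
          exact hequiv.mpr hE
        have hcard2 : gτ.card + σ.card = n + 1 := by omega
        exact ⟨hcard2, jc_iff.mpr (Dcore_rev hgτp hσ hcard2 hE2)⟩
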